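/- arXiv:2511.16488 — 6 statements merged into one kernel-verified Lean document; each statement's English description precedes it below -/
import Mathlib

section
/- Completeness of EN with respect to finite neighborhood frames: for every modal formula A, if A is valid in every finite EN-frame (i.e., every EN-frame whose set of worlds is finite), then A is derivable in the logic EN. -/
/-- Modal formulas: propositional variables, ⊥, ¬, ∧, ∨, →, □. -/
inductive MF : Type
  | var : ℕ → MF
  | bot : MF
  | neg : MF → MF
  | and : MF → MF → MF
  | or : MF → MF → MF
  | imp : MF → MF → MF
  | box : MF → MF

/-- Defined biconditional A ↔ B := (A → B) ∧ (B → A). -/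
def MF.iff (A B : MF) : MF := (A.imp B).and (B.imp A)

/-- Propositional evaluation: variables and boxed formulas are treated as atoms. -/
def MF.peval (v : MF → Bool) : MF → Bool
  | .var n => v (.var n)
  | .bot => false
  | .neg A => !(A.peval v)
  | .and A B => A.peval v && B.peval v
  | .or A B => A.peval v || B.peval v
  | .imp A B => !(A.peval v) || B.peval v
  | .box A => v A.box

/-- A is a propositional tautology. -/
def MF.Tautology (A : MF) : Prop := ∀ v : MF → Bool, A.peval v = true

/-- The logic EN: propositional tautologies, modus ponens, necessitation, RE. -/
inductive EN : MF → Prop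
  | taut {A : MF} : A.Tautology → EN A
  | mp {A B : MF} : EN (A.imp B) → EN A → EN B
  | nec {A : MF} : EN A → EN A.box
  | re {A B : MF} : EN (A.iff B) → EN (A.box.iff B.box)

/-- An EN-frame: a (nonempty) set of worlds `W` together with a neighborhood
function `N` such that the whole universe is a neighborhood of every world. -/
structure ENFrame (W : Type*) where
  N : W → Set (Set W)
  univ_mem : ∀ x : W, (Set.univ : Set W) ∈ N x

/-- The truth set of a modal formula in a model (frame + valuation). -/
def ENFrame.truth {W : Type*} (F : ENFrame W) (val : ℕ → Set W) : MF → Set W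
  | .var n => val n
  | .bot => ∅
  | .neg A => (F.truth val A)ᶜ
  | .and A B => F.truth val A ∩ F.truth val B
  | .or A B => F.truth val A ∪ F.truth val B
  | .imp A B => {x | x ∈ F.truth val A → x ∈ F.truth val B}
  | .box A => {x | F.truth val A ∈ F.N x}

/-- A formula is valid in a frame if it is valid (true at every world) in
every model on that frame. -/
def ENFrame.Valid {W : Type*} (F : ENFrame W) (A : MF) : Prop :=
  ∀ val : ℕ → Set W, F.truth val A = Set.univ

/-- ENP-frame condition: the empty set is never a neighborhood. -/
def ENFrame.IsENP {W : Type*} (F : ENFrame W) : Prop :=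
  ∀ x : W, (∅ : Set W) ∉ F.N x

/-- END-frame condition: no set is a neighborhood together with its complement. -/
def ENFrame.IsEND {W : Type*} (F : ENFrame W) : Prop :=
  ∀ (x : W) (V : Set W), V ∈ F.N x → Vᶜ ∉ F.N x

/-- ECN-frame condition: neighborhoods are closed under intersection. -/
def ENFrame.IsECN {W : Type*} (F : ENFrame W) : Prop :=
  ∀ (x : W) (U V : Set W), U ∈ F.N x → V ∈ F.N x → U ∩ V ∈ F.N x

/-! ### Auxiliary development for the completeness proof -/

namespace ENC

attribute [local instance] Classical.propDecidable

deriving instance DecidableEq for MF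

/-- Subformula list (including the formula itself). -/
def subf : MF → List MF
  | .var n => [.var n]
  | .bot => [.bot]
  | .neg B => .neg B :: subf B
  | .and B C => .and B C :: (subf B ++ subf C)
  | .or B C => .or B C :: (subf B ++ subf C)
  | .imp B C => .imp B C :: (subf B ++ subf C)
  | .box B => .box B :: subf B

lemma self_mem_subf (B : MF) : B ∈ subf B := by
  cases B <;> simp [subf]

lemma subf_trans {A : MF} : ∀ {B C : MF}, B ∈ subf A → C ∈ subf B → C ∈ subf A := by
  induction A with
  | var n =>
      intro B C hB hC; simp [subf] at hB ⊢; subst hB; simpa [subf] using hC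
  | bot =>
      intro B C hB hC; simp [subf] at hB ⊢; subst hB; simpa [subf] using hC
  | neg A ih =>
      intro B C hB hC
      simp [subf] at hB ⊢
      rcases hB with hB | hB
      · subst hB; simpa [subf] using hC
      · exact Or.inr (ih hB hC)
  | and A₁ A₂ ih₁ ih₂ =>
      intro B C hB hC
      simp [subf] at hB ⊢
      rcases hB with hB | hB | hB
      · subst hB; simpa [subf] using hC
      · exact Or.inr (Or.inl (ih₁ hB hC))
      · exact Or.inr (Or.inr (ih₂ hB hC))
  | or A₁ A₂ ih₁ ih₂ =>
      intro B C hB hC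
      simp [subf] at hB ⊢
      rcases hB with hB | hB | hB
      · subst hB; simpa [subf] using hC
      · exact Or.inr (Or.inl (ih₁ hB hC))
      · exact Or.inr (Or.inr (ih₂ hB hC))
  | imp A₁ A₂ ih₁ ih₂ =>
      intro B C hB hC
      simp [subf] at hB ⊢
      rcases hB with hB | hB | hB
      · subst hB; simpa [subf] using hC
      · exact Or.inr (Or.inl (ih₁ hB hC))
      · exact Or.inr (Or.inr (ih₂ hB hC))
  | box A ih =>
      intro B C hB hC
      simp [subf] at hB ⊢
      rcases hB with hB | hB
      · subst hB; simpa [subf] using hC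
      · exact Or.inr (ih hB hC)

/-- Evaluation only depends on the valuation on subformulas. -/
lemma peval_congr : ∀ (B : MF) (v w : MF → Bool),
    (∀ D ∈ subf B, v D = w D) → B.peval v = B.peval w := by
  intro B
  induction B with
  | var n => intro v w h; simpa [MF.peval, subf] using h (.var n) (by simp [subf])
  | bot => intro v w h; simp [MF.peval]
  | neg B ih =>
      intro v w h
      have := ih v w (fun D hD => h D (by simp [subf, hD]))
      simp [MF.peval, this]
  | and B C ihB ihC =>
      intro v w h
      have h1 := ihB v w (fun D hD => h D (by simp [subf, hD]))
      have h2 := ihC v w (fun D hD => h D (by simp [subf, hD]))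
      simp [MF.peval, h1, h2]
  | or B C ihB ihC =>
      intro v w h
      have h1 := ihB v w (fun D hD => h D (by simp [subf, hD]))
      have h2 := ihC v w (fun D hD => h D (by simp [subf, hD]))
      simp [MF.peval, h1, h2]
  | imp B C ihB ihC =>
      intro v w h
      have h1 := ihB v w (fun D hD => h D (by simp [subf, hD]))
      have h2 := ihC v w (fun D hD => h D (by simp [subf, hD]))
      simp [MF.peval, h1, h2]
  | box B ih =>
      intro v w h
      simpa [MF.peval] using h (.box B) (by simp [subf])

lemma iff_peval (v : MF → Bool) (B C : MF) :
    (B.iff C).peval v = true ↔ B.peval v = C.peval v := by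
  simp only [MF.iff, MF.peval]
  cases hb : B.peval v <;> cases hc : C.peval v <;> simp

lemma EN_iff_mp {B C : MF} (h : EN (B.iff C)) (hB : EN B) : EN C := by
  have htaut : MF.Tautology ((B.iff C).imp (B.imp C)) := by
    intro v
    simp only [MF.iff, MF.peval]
    cases hb : B.peval v <;> cases hc : C.peval v <;> simp
  exact EN.mp (EN.mp (EN.taut htaut) h) hB

lemma EN_iff_mpr {B C : MF} (h : EN (B.iff C)) (hC : EN C) : EN B := by
  have htaut : MF.Tautology ((B.iff C).imp (C.imp B)) := by
    intro v
    simp only [MF.iff, MF.peval]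
    cases hb : B.peval v <;> cases hc : C.peval v <;> simp
  exact EN.mp (EN.mp (EN.taut htaut) h) hC

/-- Discharging a list of EN-theorem premises. -/
lemma EN_foldr : ∀ (L : List MF) (T : MF), (∀ g ∈ L, EN g) →
    EN (L.foldr .imp T) → EN T := by
  intro L
  induction L with
  | nil => intro T _ h; exact h
  | cons g L ih =>
      intro T hg h
      exact ih T (fun g' hg' => hg g' (by simp [hg']))
        (EN.mp h (hg g (by simp)))

lemma peval_foldr (v : MF → Bool) : ∀ (L : List MF) (T : MF),
    ((L.foldr .imp T).peval v = true ↔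
      ((∀ g ∈ L, g.peval v = true) → T.peval v = true)) := by
  intro L
  induction L with
  | nil => simp
  | cons g L ih =>
      intro T
      simp only [List.foldr_cons, MF.peval, List.mem_cons]
      constructor
      · intro h hg
        rcases Bool.or_eq_true_iff.mp h with h | h
        · simp [hg g (Or.inl rfl)] at h
        · exact (ih T).mp h (fun g' hg' => hg g' (Or.inr hg'))
      · intro h
        cases hg : g.peval v
        · simp
        · simp only [hg, Bool.not_true, Bool.false_or]
          exact (ih T).mpr (fun hall => h (by rintro g' (rfl | hg'); exacts [hg, hall g' hg']))

section Fixed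

variable (A : MF)

/-- The finite set of subformulas of `A`. -/
def S : Finset MF := (subf A).toFinset

/-- Goodness condition on a world. -/
def Good (f : {B // B ∈ S A} → Bool) : Prop :=
  (∀ (B : MF) (h : B.box ∈ S A), EN B → f ⟨B.box, h⟩ = true) ∧
  (∀ (B C : MF) (hB : B.box ∈ S A) (hC : C.box ∈ S A),
      EN (B.iff C) → f ⟨B.box, hB⟩ = f ⟨C.box, hC⟩)

/-- Worlds of the finite canonical model. -/
def Wld : Type := {f : {B // B ∈ S A} → Bool // Good A f}

instance : Finite (Wld A) := by
  unfold Wld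
  infer_instance

instance : Nonempty (Wld A) := by
  unfold Wld Good
  refine ⟨⟨fun b => if ∃ C : MF, b.1 = C.box ∧ EN C then true else false, ?_, ?_⟩⟩
  · intro B h hEN
    exact if_pos ⟨B, rfl, hEN⟩
  · intro B C hB hC hiff
    have h1 : (∃ C' : MF, (MF.box B) = C'.box ∧ EN C') ↔ EN B := by
      constructor
      · rintro ⟨C', hC', hEN⟩; cases hC'; exact hEN
      · intro h; exact ⟨B, rfl, h⟩
    have h2 : (∃ C' : MF, (MF.box C) = C'.box ∧ EN C') ↔ EN C := by
      constructor
      · rintro ⟨C', hC', hEN⟩; cases hC'; exact hEN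
      · intro h; exact ⟨C, rfl, h⟩
    have h3 : EN B ↔ EN C := ⟨EN_iff_mp hiff, EN_iff_mpr hiff⟩
    simp only
    by_cases hEB : EN B
    · rw [if_pos (h1.mpr hEB), if_pos (h2.mpr (h3.mp hEB))]
    · rw [if_neg (fun h => hEB (h1.mp h)), if_neg (fun h => hEB (h3.mpr (h2.mp h)))]

/-- Extension of a world to a full valuation. -/
noncomputable def ext (f : {B // B ∈ S A} → Bool) : MF → Bool :=
  fun B => if h : B ∈ S A then f ⟨B, h⟩ else false

/-- Truth set of a formula computed propositionally. -/
def tset (B : MF) : Set (Wld A) := {x | MF.peval (ext A x.1) B = true}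

/-- The finite canonical frame. -/
def Fr : ENFrame (Wld A) where
  N x := {V | V = Set.univ ∨ ∃ B : MF, B.box ∈ S A ∧ ext A x.1 B.box = true ∧ V = tset A B}
  univ_mem x := Or.inl rfl

/-- The canonical valuation. -/
def cval : ℕ → Set (Wld A) := fun n => tset A (.var n)

/-- The list of relevant EN theorems. -/
noncomputable def G : List MF :=
  (subf A).flatMap fun B =>
    (if EN B then [B.box] else []) ++
    ((subf A).flatMap fun C =>
      if EN (B.iff C) then [(B.box).iff (C.box)] else [])

lemma G_EN : ∀ g ∈ G A, EN g := by
  intro g hg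
  simp only [G, List.mem_flatMap, List.mem_append] at hg
  obtain ⟨B, _, hg | hg⟩ := hg
  · split at hg
    · simp at hg; subst hg; exact EN.nec ‹EN B›
    · simp at hg
  · obtain ⟨C, _, hg⟩ := hg
    split at hg
    · simp at hg; subst hg; exact EN.re ‹EN (B.iff C)›
    · simp at hg

lemma G_box {B : MF} (hB : B ∈ subf A) (hEN : EN B) : B.box ∈ G A := by
  simp only [G, List.mem_flatMap, List.mem_append]
  exact ⟨B, hB, Or.inl (by rw [if_pos hEN]; simp)⟩

lemma G_iff {B C : MF} (hB : B ∈ subf A) (hC : C ∈ subf A)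
    (hEN : EN (B.iff C)) : (B.box).iff (C.box) ∈ G A := by
  simp only [G, List.mem_flatMap, List.mem_append]
  exact ⟨B, hB, Or.inr ⟨C, hC, by rw [if_pos hEN]; simp⟩⟩

lemma mem_S_iff {B : MF} : B ∈ S A ↔ B ∈ subf A := by
  simp [S]

/-- From a valuation satisfying all of `G A`, we can build a world. -/
lemma restrict_good (v : MF → Bool) (hv : ∀ g ∈ G A, g.peval v = true) :
    Good A (fun b => v b.1) := by
  constructor
  · intro B h hEN
    have hBsub : B ∈ subf A :=
      subf_trans ((mem_S_iff A).mp h) (by simp [subf, self_mem_subf])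
    have := hv (B.box) (G_box A hBsub hEN)
    simpa [MF.peval] using this
  · intro B C hB hC hiff
    have hBsub : B ∈ subf A :=
      subf_trans ((mem_S_iff A).mp hB) (by simp [subf, self_mem_subf])
    have hCsub : C ∈ subf A :=
      subf_trans ((mem_S_iff A).mp hC) (by simp [subf, self_mem_subf])
    have := hv _ (G_iff A hBsub hCsub hiff)
    have h2 := (iff_peval v B.box C.box).mp this
    simpa [MF.peval] using h2

lemma ext_agree (x : Wld A) (v : MF → Bool) (hx : ∀ b : {B // B ∈ S A}, x.1 b = v b.1)
    {D : MF} (hD : D ∈ subf A) : D.peval (ext A x.1) = D.peval v := by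
  apply peval_congr
  intro E hE
  have hES : E ∈ S A := (mem_S_iff A).mpr (subf_trans hD hE)
  simp [ext, hES, hx ⟨E, hES⟩]

/-- Key lemma: equal truth sets of subformulas yield provable equivalence. -/
lemma key {B C : MF} (hB : B ∈ subf A) (hC : C ∈ subf A)
    (h : tset A B = tset A C) : EN (B.iff C) := by
  apply EN_foldr (G A) _ (G_EN A)
  apply EN.taut
  intro v
  rw [peval_foldr]
  intro hv
  set w : {B // B ∈ S A} → Bool := fun b => v b.1 with hw
  have hgood : Good A w := restrict_good A v hv
  set x : Wld A := ⟨w, hgood⟩ with hx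
  have hxv : ∀ b : {B // B ∈ S A}, x.1 b = v b.1 := fun b => rfl
  have hmem : x ∈ tset A B ↔ x ∈ tset A C := by rw [h]
  have hB' : B.peval (ext A x.1) = B.peval v := ext_agree A x v hxv hB
  have hC' : C.peval (ext A x.1) = C.peval v := ext_agree A x v hxv hC
  simp only [tset, Set.mem_setOf_eq, hB', hC'] at hmem
  rw [iff_peval]
  cases hb : B.peval v <;> cases hc : C.peval v <;> simp_all

/-- Key lemma: full truth set of a subformula yields provability. -/
lemma key2 {B : MF} (hB : B ∈ subf A) (h : tset A B = Set.univ) : EN B := by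
  apply EN_foldr (G A) _ (G_EN A)
  apply EN.taut
  intro v
  rw [peval_foldr]
  intro hv
  set w : {B // B ∈ S A} → Bool := fun b => v b.1 with hw
  have hgood : Good A w := restrict_good A v hv
  set x : Wld A := ⟨w, hgood⟩ with hx
  have hxv : ∀ b : {B // B ∈ S A}, x.1 b = v b.1 := fun b => rfl
  have hmem : x ∈ tset A B := h ▸ Set.mem_univ x
  have hB' : B.peval (ext A x.1) = B.peval v := ext_agree A x v hxv hB
  simpa [tset, hB'] using hmem

/-- Truth lemma. -/
lemma truth_eq : ∀ (B : MF), B ∈ subf A → (Fr A).truth (cval A) B = tset A B := by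
  intro B
  induction B with
  | var n => intro _; rfl
  | bot =>
      intro _
      ext x
      simp [ENFrame.truth, tset, MF.peval]
  | neg B ih =>
      intro h
      have hB : B ∈ subf A := subf_trans h (by simp [subf, self_mem_subf])
      ext x
      simp [ENFrame.truth, tset, MF.peval, ih hB]
  | and B C ihB ihC =>
      intro h
      have hB : B ∈ subf A := subf_trans h (by simp [subf, self_mem_subf])
      have hC : C ∈ subf A := subf_trans h (by simp [subf, self_mem_subf])
      ext x
      simp [ENFrame.truth, tset, MF.peval, ihB hB, ihC hC]
  | or B C ihB ihC =>
      intro h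
      have hB : B ∈ subf A := subf_trans h (by simp [subf, self_mem_subf])
      have hC : C ∈ subf A := subf_trans h (by simp [subf, self_mem_subf])
      ext x
      simp [ENFrame.truth, tset, MF.peval, ihB hB, ihC hC]
  | imp B C ihB ihC =>
      intro h
      have hB : B ∈ subf A := subf_trans h (by simp [subf, self_mem_subf])
      have hC : C ∈ subf A := subf_trans h (by simp [subf, self_mem_subf])
      ext x
      simp only [ENFrame.truth, Set.mem_setOf_eq, ihB hB, ihC hC, tset, MF.peval,
        Bool.or_eq_true, Bool.not_eq_true']
      cases hb : MF.peval (ext A x.1) B <;> simp [hb]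
  | box B ih =>
      intro h
      have hB : B ∈ subf A := subf_trans h (by simp [subf, self_mem_subf])
      have hboxS : B.box ∈ S A := (mem_S_iff A).mpr h
      ext x
      show (Fr A).truth (cval A) B ∈ (Fr A).N x ↔ x ∈ tset A (B.box)
      rw [ih hB]
      have hN : (Fr A).N x = {V | V = Set.univ ∨
          ∃ C : MF, C.box ∈ S A ∧ ext A x.1 C.box = true ∧ V = tset A C} := rfl
      rw [hN]
      have hrhs : (x ∈ tset A (B.box)) ↔ ext A x.1 (B.box) = true := Iff.rfl
      rw [Set.mem_setOf_eq, hrhs]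
      constructor
      · rintro (huniv | ⟨C, hCS, hCx, hBC⟩)
        · have hEN : EN B := key2 A hB huniv
          have := x.2.1 B hboxS hEN
          simp [ext, hboxS, this]
        · have hCsub : C ∈ subf A :=
            subf_trans ((mem_S_iff A).mp hCS) (by simp [subf, self_mem_subf])
          have hEN : EN (B.iff C) := key A hB hCsub hBC
          have heq := x.2.2 B C hboxS hCS hEN
          have hCx' : x.1 ⟨C.box, hCS⟩ = true := by simpa [ext, hCS] using hCx
          simp [ext, hboxS, heq, hCx']
      · intro hx
        exact Or.inr ⟨B, hboxS, hx, rfl⟩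

end Fixed

end ENC

/-- Completeness of EN with respect to finite EN-frames. -/
theorem EN_completeness (A : MF)
    (h : ∀ (W : Type) [Nonempty W] [Finite W] (F : ENFrame W), F.Valid A) :
    EN A := by
  have hv := h (ENC.Wld A) (ENC.Fr A) (ENC.cval A)
  rw [ENC.truth_eq A A (ENC.self_mem_subf A)] at hv
  exact ENC.key2 A (ENC.self_mem_subf A) hv
end

section
/- Completeness of ENP with respect to finite neighborhood frames: for every modal formula A, if A is valid in every finite ENP-frame (i.e., every ENP-frame whose set of worlds is finite), then A is derivable in the logic ENP. -/
/-- The logic ENP: EN plus the axiom ¬□⊥. -/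
inductive ENP : MF → Prop
  | taut {A : MF} : A.Tautology → ENP A
  | axP : ENP MF.bot.box.neg
  | mp {A B : MF} : ENP (A.imp B) → ENP A → ENP B
  | nec {A : MF} : ENP A → ENP A.box
  | re {A B : MF} : ENP (A.iff B) → ENP (A.box.iff B.box)

deriving instance DecidableEq for MF

namespace MFC

/-- The "atoms" (propositional variables and boxed formulas) occurring in a
formula, recursing inside boxes as well. -/
def atoms : MF → List MF
  | .var n => [.var n]
  | .bot => []
  | .neg A => atoms A
  | .and A B => atoms A ++ atoms B
  | .or A B => atoms A ++ atoms B
  | .imp A B => atoms A ++ atoms B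
  | .box A => .box A :: atoms A

lemma atoms_shape {B C : MF} (hC : C ∈ atoms B) (u : MF → Bool) :
    C.peval u = u C := by
  induction B with
  | var n => simp [atoms] at hC; subst hC; rfl
  | bot => simp [atoms] at hC
  | neg A ih => exact ih hC
  | and A B ih1 ih2 => rcases List.mem_append.1 hC with h | h; exacts [ih1 h, ih2 h]
  | or A B ih1 ih2 => rcases List.mem_append.1 hC with h | h; exacts [ih1 h, ih2 h]
  | imp A B ih1 ih2 => rcases List.mem_append.1 hC with h | h; exacts [ih1 h, ih2 h]
  | box A ih =>
      rcases List.mem_cons.1 hC with h | h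
      · subst h; rfl
      · exact ih h

lemma atoms_closed {B C : MF} (hC : MF.box C ∈ atoms B) : atoms C ⊆ atoms B := by
  induction B with
  | var n => simp [atoms] at hC
  | bot => simp [atoms] at hC
  | neg A ih => exact ih hC
  | and A B ih1 ih2 =>
      rcases List.mem_append.1 hC with h | h
      · exact List.Subset.trans (ih1 h) (List.subset_append_left _ _)
      · exact List.Subset.trans (ih2 h) (List.subset_append_right _ _)
  | or A B ih1 ih2 =>
      rcases List.mem_append.1 hC with h | h
      · exact List.Subset.trans (ih1 h) (List.subset_append_left _ _)
      · exact List.Subset.trans (ih2 h) (List.subset_append_right _ _)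
  | imp A B ih1 ih2 =>
      rcases List.mem_append.1 hC with h | h
      · exact List.Subset.trans (ih1 h) (List.subset_append_left _ _)
      · exact List.Subset.trans (ih2 h) (List.subset_append_right _ _)
  | box A ih =>
      rcases List.mem_cons.1 hC with h | h
      · cases h; exact List.subset_cons_self _ _
      · exact List.Subset.trans (ih h) (List.subset_cons_self _ _)

lemma peval_congr {B : MF} {u w : MF → Bool} (h : ∀ C ∈ atoms B, u C = w C) :
    B.peval u = B.peval w := by
  induction B with
  | var n => exact h _ (by simp [atoms])
  | bot => rfl
  | neg A ih => simp [MF.peval, ih h]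
  | and A B ih1 ih2 =>
      simp only [MF.peval]
      rw [ih1 (fun C hC => h C (List.mem_append.2 (Or.inl hC))),
        ih2 (fun C hC => h C (List.mem_append.2 (Or.inr hC)))]
  | or A B ih1 ih2 =>
      simp only [MF.peval]
      rw [ih1 (fun C hC => h C (List.mem_append.2 (Or.inl hC))),
        ih2 (fun C hC => h C (List.mem_append.2 (Or.inr hC)))]
  | imp A B ih1 ih2 =>
      simp only [MF.peval]
      rw [ih1 (fun C hC => h C (List.mem_append.2 (Or.inl hC))),
        ih2 (fun C hC => h C (List.mem_append.2 (Or.inr hC)))]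
  | box A ih => exact h _ (List.mem_cons_self)

/-- The "state description" of a valuation over a list of formulas. -/
def chi (v : MF → Bool) : List MF → MF
  | [] => MF.bot.neg
  | a :: L => (cond (v a) a a.neg).and (chi v L)

lemma chi_congr {u v : MF → Bool} {L : List MF} (h : ∀ x ∈ L, u x = v x) :
    chi u L = chi v L := by
  induction L with
  | nil => rfl
  | cons a L ih =>
      simp only [chi]
      rw [h a (List.mem_cons_self), ih (fun x hx => h x (List.mem_cons_of_mem _ hx))]

lemma agree_of_chi {v u : MF → Bool} {L : List MF}
    (h : (chi v L).peval u = true) : ∀ C ∈ L, C.peval u = v C := by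
  induction L with
  | nil => simp
  | cons a L ih =>
      simp only [chi, MF.peval, Bool.and_eq_true] at h
      intro C hC
      rcases List.mem_cons.1 hC with rfl | hC
      · cases hv : v C <;> simp [hv] at h
        · simpa [MF.peval] using h.1
        · exact h.1
      · exact ih h.2 C hC

lemma mp2 {A B C : MF} (t : (A.imp (B.imp C)).Tautology) (ha : ENP A) (hb : ENP B) :
    ENP C := ((ENP.taut t).mp ha).mp hb

lemma chi_elim {B : MF} : ∀ (L : List MF), L.Nodup →
    (∀ v : MF → Bool, ENP ((chi v L).imp B)) → ENP B := by
  intro L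
  induction L with
  | nil =>
      intro _ hv
      exact (hv (fun _ => false)).mp (ENP.taut (fun u => by simp [chi, MF.peval]))
  | cons a L ih =>
      intro hnd hv
      have ha : a ∉ L := (List.nodup_cons.1 hnd).1
      apply ih (List.nodup_cons.1 hnd).2
      intro v
      have e1 : chi (fun x => if x = a then true else v x) L = chi v L :=
        chi_congr (fun x hx => if_neg (fun h : x = a => ha (h ▸ hx)))
      have e0 : chi (fun x => if x = a then false else v x) L = chi v L :=
        chi_congr (fun x hx => if_neg (fun h : x = a => ha (h ▸ hx)))
      have h1 : ENP ((a.and (chi v L)).imp B) := by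
        have h1 := hv (fun x => if x = a then true else v x)
        rw [show chi (fun x => if x = a then true else v x) (a :: L)
            = (cond (if a = a then true else v a) a a.neg).and
              (chi (fun x => if x = a then true else v x) L) from rfl,
          if_pos rfl, cond_true, e1] at h1
        exact h1
      have h0 : ENP (((a.neg).and (chi v L)).imp B) := by
        have h0 := hv (fun x => if x = a then false else v x)
        rw [show chi (fun x => if x = a then false else v x) (a :: L)
            = (cond (if a = a then false else v a) a a.neg).and
              (chi (fun x => if x = a then false else v x) L) from rfl,
          if_pos rfl, cond_false, e0] at h0
        exact h0
      refine mp2 ?_ h1 h0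
      intro u
      simp only [MF.peval]
      cases a.peval u <;> cases (chi v L).peval u <;> cases B.peval u <;> rfl

def Con (L : List MF) (v : MF → Bool) : Prop := ¬ ENP ((chi v L).neg)

lemma sem (L : List MF) (hnd : L.Nodup) {B : MF} (hB : atoms B ⊆ L)
    (hv : ∀ v : MF → Bool, Con L v → B.peval v = true) : ENP B := by
  apply chi_elim L hnd
  intro v
  by_cases hc : ENP ((chi v L).neg)
  · refine mp2 ?_ hc hc
    intro u
    simp only [MF.peval]
    cases (chi v L).peval u <;> cases B.peval u <;> rfl
  · have hb := hv v hc
    refine ENP.taut (fun u => ?_)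
    simp only [MF.peval]
    cases hu : (chi v L).peval u
    · rfl
    · have hag : ∀ C ∈ atoms B, u C = v C := by
        intro C hC
        have h1 := agree_of_chi hu C (hB hC)
        rwa [atoms_shape hC] at h1
      rw [peval_congr hag, hb]; rfl


/-! ### The canonical finite model -/

def extv (L : List MF) (f : {B : MF // B ∈ L} → Bool) : MF → Bool :=
  fun B => if h : B ∈ L then f ⟨B, h⟩ else false

def Wld (L : List MF) : Type := { f : {B : MF // B ∈ L} → Bool // Con L (extv L f) }

instance (L : List MF) : Finite (Wld L) := by
  have : Finite {B : MF // B ∈ L} := L.finite_toSet.to_subtype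
  unfold Wld
  infer_instance

/-- The valuation associated to a world. -/
def vx {L : List MF} (x : Wld L) : MF → Bool := extv L x.val

/-- The "truth set" of a formula, defined via propositional evaluation. -/
def tsetF (L : List MF) (B : MF) : Set (Wld L) := {y | B.peval (vx y) = true}

def theFrame (L : List MF) : ENFrame (Wld L) where
  N x := {S | S = Set.univ ∨ ∃ B, MF.box B ∈ L ∧ vx x B.box = true ∧ S = tsetF L B}
  univ_mem x := Or.inl rfl

lemma extv_restrict (L : List MF) (v : MF → Bool) :
    ∀ C ∈ L, extv L (fun b => v b.val) C = v C := by
  intro C hC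
  simp [extv, hC]

def mkWld (L : List MF) (v : MF → Bool) (hv : Con L v) : Wld L :=
  ⟨fun b => v b.val, by
    show ¬ ENP ((chi (extv L fun b => v b.val) L).neg)
    rw [chi_congr (extv_restrict L v)]
    exact hv⟩

lemma vx_mkWld (L : List MF) (v : MF → Bool) (hv : Con L v) :
    ∀ C ∈ L, vx (mkWld L v hv) C = v C := extv_restrict L v

/-- A world is consistent: no provable formula is falsified by its state
description. -/
lemma refute {L : List MF} (x : Wld L) {D : MF} (hD : ENP D)
    (hf : ∀ u : MF → Bool, (chi (vx x) L).peval u = true → D.peval u = false) :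
    False := by
  have t : (D.imp (chi (vx x) L).neg).Tautology := by
    intro u
    simp only [MF.peval]
    cases hc : (chi (vx x) L).peval u
    · simp
    · simp [hf u hc]
  exact x.prop (ENP.mp (ENP.taut t) hD)

/-- If a formula (with atoms in `L`) holds at every world, it is provable. -/
lemma sem_wld (L : List MF) (hnd : L.Nodup) {B : MF} (hB : atoms B ⊆ L)
    (hw : ∀ y : Wld L, B.peval (vx y) = true) : ENP B := by
  apply sem L hnd hB
  intro v hv
  have h1 := hw (mkWld L v hv)
  rwa [peval_congr (fun C hC => vx_mkWld L v hv C (hB hC))] at h1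

lemma taut_and (X Y : MF) : (X.imp (Y.imp (X.and Y))).Tautology := by
  intro u
  simp only [MF.peval]
  cases X.peval u <;> cases Y.peval u <;> rfl

lemma truth_lemma (L : List MF) (hnd : L.Nodup)
    (hcl : ∀ C, MF.box C ∈ L → atoms C ⊆ L) :
    ∀ B : MF, atoms B ⊆ L →
      (theFrame L).truth (fun n => {x | vx x (.var n) = true}) B = tsetF L B := by
  intro B
  induction B with
  | var n => intro _; rfl
  | bot =>
      intro _
      ext y
      simp [ENFrame.truth, tsetF, MF.peval]
  | neg C ih =>
      intro hB
      ext y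
      simp [ENFrame.truth, tsetF, MF.peval, ih hB, Set.mem_compl_iff]
  | and C D ih1 ih2 =>
      intro hB
      have h1 := ih1 (fun x hx => hB (List.mem_append.2 (Or.inl hx)))
      have h2 := ih2 (fun x hx => hB (List.mem_append.2 (Or.inr hx)))
      ext y
      simp [ENFrame.truth, tsetF, MF.peval, h1, h2]
  | or C D ih1 ih2 =>
      intro hB
      have h1 := ih1 (fun x hx => hB (List.mem_append.2 (Or.inl hx)))
      have h2 := ih2 (fun x hx => hB (List.mem_append.2 (Or.inr hx)))
      ext y
      simp [ENFrame.truth, tsetF, MF.peval, h1, h2]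
  | imp C D ih1 ih2 =>
      intro hB
      have h1 := ih1 (fun x hx => hB (List.mem_append.2 (Or.inl hx)))
      have h2 := ih2 (fun x hx => hB (List.mem_append.2 (Or.inr hx)))
      ext y
      simp only [ENFrame.truth, tsetF, MF.peval, h1, h2, Set.mem_setOf_eq,
        Bool.or_eq_true, Bool.not_eq_true']
      cases hc : C.peval (vx y) <;> cases hd : D.peval (vx y) <;> simp
  | box C ih =>
      intro hB
      have hbox : MF.box C ∈ L := hB (List.mem_cons_self)
      have hCat : atoms C ⊆ L := fun x hx => hB (List.mem_cons_of_mem _ hx)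
      have hC := ih hCat
      ext x
      simp only [ENFrame.truth, hC, Set.mem_setOf_eq]
      constructor
      · rintro (huniv | ⟨D, hDL, hxD, hDE⟩)
        · -- tsetF L C = univ, so ⊢ C, so ⊢ □C
          have hall : ∀ y : Wld L, C.peval (vx y) = true := by
            intro y
            have : y ∈ tsetF L C := huniv ▸ Set.mem_univ y
            exact this
          have hPB : ENP (MF.box C) := ENP.nec (sem_wld L hnd hCat hall)
          show (MF.box C).peval (vx x) = true
          cases hxb : vx x (MF.box C)
          · exfalso
            apply refute x hPB
            intro u hu
            have h1 := agree_of_chi hu (MF.box C) hbox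
            rw [hxb] at h1
            exact h1
          · exact hxb
        · -- tsetF L C = tsetF L D with □D true at x
          have hall : ∀ y : Wld L, ((C.iff D).peval (vx y)) = true := by
            intro y
            have : (y ∈ tsetF L C) ↔ (y ∈ tsetF L D) := by rw [hDE]
            simp only [tsetF, Set.mem_setOf_eq] at this
            simp only [MF.iff, MF.peval]
            cases h1 : C.peval (vx y) <;> cases h2 : D.peval (vx y) <;>
              simp [h1, h2] at this ⊢
          have hiff : ENP (C.iff D) := by
            apply sem_wld L hnd ?_ hall
            intro z hz
            simp only [MF.iff, atoms, List.mem_append] at hz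
            rcases hz with (hz | hz) | (hz | hz)
            exacts [hCat hz, hcl D hDL hz, hcl D hDL hz, hCat hz]
          have hre : ENP ((MF.box C).iff (MF.box D)) := ENP.re hiff
          show (MF.box C).peval (vx x) = true
          cases hxb : vx x (MF.box C)
          · exfalso
            apply refute x hre
            intro u hu
            have h1 := agree_of_chi hu (MF.box C) hbox
            have h2 := agree_of_chi hu (MF.box D) hDL
            rw [hxb] at h1
            rw [hxD] at h2
            simp only [MF.iff, MF.peval] at h1 h2 ⊢
            rw [h1, h2]
            rfl
          · exact hxb
      · intro hx
        exact Or.inr ⟨C, hbox, hx, rfl⟩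

lemma isENP (L : List MF) (hnd : L.Nodup)
    (hcl : ∀ C, MF.box C ∈ L → atoms C ⊆ L) : (theFrame L).IsENP := by
  intro x hmem
  rcases hmem with huniv | ⟨C, hCL, hxC, hempty⟩
  · have : (x : Wld L) ∈ (∅ : Set (Wld L)) := by rw [huniv]; trivial
    exact this
  · -- tsetF L C = ∅, so ⊢ ¬C, so ⊢ □C ↔ □⊥, contradicting ¬□⊥ and □C at x
    have hall : ∀ y : Wld L, C.peval (vx y) = false := by
      intro y
      cases hy : C.peval (vx y)
      · rfl
      · exfalso
        have : y ∈ tsetF L C := hy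
        rw [← hempty] at this
        exact this
    have hiff : ENP (C.iff MF.bot) := by
      apply sem_wld L hnd
      · intro z hz
        simp only [MF.iff, atoms, List.mem_append] at hz
        rcases hz with (hz | hz) | (hz | hz)
        exacts [hcl C hCL hz, absurd hz (by simp [atoms] at hz),
          absurd hz (by simp [atoms] at hz), hcl C hCL hz]
      · intro y
        simp only [MF.iff, MF.peval, hall y]
        rfl
    have hre : ENP ((MF.box C).iff (MF.bot.box)) := ENP.re hiff
    have hD : ENP (((MF.box C).iff (MF.bot.box)).and (MF.bot.box.neg)) :=
      mp2 (taut_and _ _) hre ENP.axP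
    apply refute x hD
    intro u hu
    have h1 := agree_of_chi hu (MF.box C) hCL
    rw [hxC] at h1
    simp only [MF.iff, MF.peval] at h1 ⊢
    rw [h1]
    cases u MF.bot.box <;> rfl

end MFC

/-- Completeness of ENP with respect to finite ENP-frames. -/theorem ENP_completeness (A : MF)
    (h : ∀ (W : Type) [Nonempty W] [Finite W] (F : ENFrame W), F.IsENP → F.Valid A) :
    ENP A := by
  classical
  by_contra hA
  set L := (MFC.atoms A).dedup with hLdef
  have hnd : L.Nodup := List.nodup_dedup _
  have hmemL : ∀ C : MF, C ∈ L ↔ C ∈ MFC.atoms A := fun C => List.mem_dedup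
  have hAL : MFC.atoms A ⊆ L := fun C hC => (hmemL C).2 hC
  have hcl : ∀ C, MF.box C ∈ L → MFC.atoms C ⊆ L := fun C hC z hz =>
    (hmemL z).2 (MFC.atoms_closed ((hmemL _).1 hC) hz)
  have hex : ∃ v : MF → Bool, MFC.Con L v ∧ A.peval v = false := by
    by_contra hno
    push_neg at hno
    apply hA
    apply MFC.sem L hnd hAL
    intro v hv
    cases hAv : A.peval v
    · exact absurd hAv (hno v hv)
    · rfl
  obtain ⟨v, hv, hvA⟩ := hex
  let x₀ : MFC.Wld L := MFC.mkWld L v hv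
  haveI : Nonempty (MFC.Wld L) := ⟨x₀⟩
  have hval := h (MFC.Wld L) (MFC.theFrame L) (MFC.isENP L hnd hcl)
    (fun n => {x | MFC.vx x (.var n) = true})
  rw [MFC.truth_lemma L hnd hcl A hAL] at hval
  have hx : x₀ ∈ MFC.tsetF L A := hval ▸ Set.mem_univ x₀
  have hpe : A.peval (MFC.vx x₀) = A.peval v :=
    MFC.peval_congr (fun C hC => MFC.vx_mkWld L v hv C (hAL hC))
  have : A.peval (MFC.vx x₀) = true := hx
  rw [hpe, hvA] at this
  exact Bool.false_ne_true this
end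

section
/- Completeness of END with respect to finite neighborhood frames: for every modal formula A, if A is valid in every finite END-frame (i.e., every END-frame whose set of worlds is finite), then A is derivable in the logic END. -/
/-- The logic END: EN plus the axiom scheme ¬(□A ∧ □¬A). -/
inductive END : MF → Prop
  | taut {A : MF} : A.Tautology → END A
  | axD {A : MF} : END (A.box.and A.neg.box).neg
  | mp {A B : MF} : END (A.imp B) → END A → END B
  | nec {A : MF} : END A → END A.box
  | re {A B : MF} : END (A.iff B) → END (A.box.iff B.box)

deriving instance DecidableEq for MF

/-- shallow atoms -/
def atomsOf : MF → Finset MF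
  | .var n => {MF.var n}
  | .bot => ∅
  | .neg A => atomsOf A
  | .and A B => atomsOf A ∪ atomsOf B
  | .or A B => atomsOf A ∪ atomsOf B
  | .imp A B => atomsOf A ∪ atomsOf B
  | .box A => {MF.box A}

/-- deep atoms (atoms of all subformulas) -/
def atomsAll : MF → Finset MF
  | .var n => {MF.var n}
  | .bot => ∅
  | .neg A => atomsAll A
  | .and A B => atomsAll A ∪ atomsAll B
  | .or A B => atomsAll A ∪ atomsAll B
  | .imp A B => atomsAll A ∪ atomsAll B
  | .box A => insert (MF.box A) (atomsAll A)

lemma atomsOf_subset_atomsAll : ∀ B : MF, atomsOf B ⊆ atomsAll B := by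
  intro B
  induction B with
  | var n => simp [atomsOf, atomsAll]
  | bot => simp [atomsOf, atomsAll]
  | neg A ih => simpa [atomsOf, atomsAll] using ih
  | and A B ihA ihB => simp only [atomsOf, atomsAll]; exact Finset.union_subset_union ihA ihB
  | or A B ihA ihB => simp only [atomsOf, atomsAll]; exact Finset.union_subset_union ihA ihB
  | imp A B ihA ihB => simp only [atomsOf, atomsAll]; exact Finset.union_subset_union ihA ihB
  | box A ih => simp [atomsOf, atomsAll]

lemma atomsAll_of_box_mem : ∀ C B : MF, MF.box B ∈ atomsAll C → atomsAll B ⊆ atomsAll C := by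
  intro C
  induction C with
  | var n => intro B hB; simp [atomsAll] at hB
  | bot => intro B hB; simp [atomsAll] at hB
  | neg A ih => intro B hB; exact ih B hB
  | and A B' ihA ihB => intro B hB; simp only [atomsAll, Finset.mem_union] at hB ⊢
                        rcases hB with h | h
                        · exact (ihA B h).trans Finset.subset_union_left
                        · exact (ihB B h).trans Finset.subset_union_right
  | or A B' ihA ihB => intro B hB; simp only [atomsAll, Finset.mem_union] at hB ⊢
                       rcases hB with h | h
                       · exact (ihA B h).trans Finset.subset_union_left
                       · exact (ihB B h).trans Finset.subset_union_right
  | imp A B' ihA ihB => intro B hB; simp only [atomsAll, Finset.mem_union] at hB ⊢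
                        rcases hB with h | h
                        · exact (ihA B h).trans Finset.subset_union_left
                        · exact (ihB B h).trans Finset.subset_union_right
  | box A ih => intro B hB
                simp only [atomsAll, Finset.mem_insert] at hB
                rcases hB with h | h
                · cases h; exact Finset.subset_insert _ _
                · exact (ih B h).trans (Finset.subset_insert _ _)

lemma atom_peval : ∀ B C : MF, C ∈ atomsOf B → ∀ u : MF → Bool, C.peval u = u C := by
  intro B
  induction B with
  | var n => intro C hC u; simp [atomsOf] at hC; subst hC; rfl
  | bot => intro C hC; simp [atomsOf] at hC
  | neg A ih => exact ih
  | and A B ihA ihB => intro C hC u; simp only [atomsOf, Finset.mem_union] at hC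
                       rcases hC with h | h; exacts [ihA C h u, ihB C h u]
  | or A B ihA ihB => intro C hC u; simp only [atomsOf, Finset.mem_union] at hC
                      rcases hC with h | h; exacts [ihA C h u, ihB C h u]
  | imp A B ihA ihB => intro C hC u; simp only [atomsOf, Finset.mem_union] at hC
                       rcases hC with h | h; exacts [ihA C h u, ihB C h u]
  | box A ih => intro C hC u; simp [atomsOf] at hC; subst hC; rfl

lemma peval_congr : ∀ (B : MF) (u₁ u₂ : MF → Bool),
    (∀ C ∈ atomsOf B, u₁ C = u₂ C) → B.peval u₁ = B.peval u₂ := by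
  intro B
  induction B with
  | var n => intro u₁ u₂ h; simpa [MF.peval] using h _ (by simp [atomsOf])
  | bot => intro u₁ u₂ h; rfl
  | neg A ih => intro u₁ u₂ h; simp only [MF.peval]; rw [ih u₁ u₂ h]
  | and A B ihA ihB => intro u₁ u₂ h; simp only [MF.peval]
                       rw [ihA u₁ u₂ fun C hC => h C (by simp [atomsOf, hC]),
                           ihB u₁ u₂ fun C hC => h C (by simp [atomsOf, hC])]
  | or A B ihA ihB => intro u₁ u₂ h; simp only [MF.peval]
                      rw [ihA u₁ u₂ fun C hC => h C (by simp [atomsOf, hC]),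
                          ihB u₁ u₂ fun C hC => h C (by simp [atomsOf, hC])]
  | imp A B ihA ihB => intro u₁ u₂ h; simp only [MF.peval]
                       rw [ihA u₁ u₂ fun C hC => h C (by simp [atomsOf, hC]),
                           ihB u₁ u₂ fun C hC => h C (by simp [atomsOf, hC])]
  | box A ih => intro u₁ u₂ h; simpa [MF.peval] using h _ (by simp [atomsOf])


def lit (v : MF → Bool) (B : MF) : MF := if v B then B else B.neg

def conj (v : MF → Bool) : List MF → MF
  | [] => MF.bot.neg
  | B :: l => (lit v B).and (conj v l)

lemma peval_conj (v u : MF → Bool) (l : List MF) :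
    (conj v l).peval u = true ↔ ∀ B ∈ l, B.peval u = v B := by
  induction l with
  | nil => simp [conj, MF.peval]
  | cons B l ih =>
    simp only [conj, MF.peval, Bool.and_eq_true, ih, List.mem_cons]
    constructor
    · rintro ⟨h1, h2⟩ C hC
      rcases hC with rfl | hC
      · unfold lit at h1
        by_cases hv : v C
        · simp [hv] at h1 ⊢; exact h1
        · simp [hv, MF.peval] at h1 ⊢; simpa using h1
      · exact h2 C hC
    · intro hh
      refine ⟨?_, fun C hC => hh C (Or.inr hC)⟩
      have := hh B (Or.inl rfl)
      unfold lit
      by_cases hv : v B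
      · simp [hv] at this ⊢; exact this
      · simp [hv, MF.peval] at this ⊢; simp [this]

lemma chain_true (g : α → MF) (D : MF) (u : MF → Bool) :
    ∀ l : List α, (D.peval u = true ∨ ∃ w ∈ l, (g w).peval u = false) →
      (l.foldr (fun w r => (g w).imp r) D).peval u = true := by
  intro l
  induction l with
  | nil =>
    intro h
    rcases h with h | ⟨w, hw, _⟩
    · exact h
    · simp at hw
  | cons w l ih =>
    intro h
    simp only [List.foldr, MF.peval]
    rcases h with h | ⟨w', hw', hf⟩
    · rw [ih (Or.inl h)]; simp
    · rcases List.mem_cons.mp hw' with rfl | hw'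
      · rw [hf]; simp
      · rw [ih (Or.inr ⟨w', hw', hf⟩)]; simp

lemma chain_peel (g : α → MF) (D : MF) :
    ∀ l : List α, (∀ w ∈ l, END (g w)) →
      END (l.foldr (fun w r => (g w).imp r) D) → END D := by
  intro l
  induction l with
  | nil => intro _ h; exact h
  | cons w l ih =>
    intro hg h
    exact ih (fun w' hw' => hg w' (List.mem_cons_of_mem _ hw'))
      (END.mp h (hg w List.mem_cons_self))

section Worlds
variable (ats : Finset MF)

def World := {B : MF // B ∈ ats} → Bool

instance : Fintype (World ats) := by unfold World; infer_instance

def extW (w : World ats) : MF → Bool := fun B => if h : B ∈ ats then w ⟨B, h⟩ else false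

def ConW (w : World ats) : Prop := ¬ END (conj (extW ats w) ats.toList).neg

/-- core completeness lemma: semantically valid over consistent worlds implies provable -/
lemma prov_of_sem (D : MF) (hD : atomsOf D ⊆ ats)
    (hsem : ∀ w : World ats, ConW ats w → D.peval (extW ats w) = true) : END D := by
  classical
  set g : World ats → MF := fun w =>
    if ConW ats w then MF.bot.neg else (conj (extW ats w) ats.toList).neg with hg
  have hgp : ∀ w : World ats, END (g w) := by
    intro w
    by_cases hc : ConW ats w
    · simp only [hg, if_pos hc]
      exact END.taut (fun v => by simp [MF.peval])
    · simp only [hg, if_neg hc]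
      exact not_not.mp hc
  set l := (Finset.univ : Finset (World ats)).toList with hl
  refine chain_peel g D l (fun w _ => hgp w) (END.taut ?_)
  intro u
  refine chain_true g D u l ?_
  by_cases hDu : D.peval u = true
  · exact Or.inl hDu
  · set w₀ : World ats := fun b => b.1.peval u with hw₀
    have hext : ∀ C ∈ ats, extW ats w₀ C = C.peval u := by
      intro C hC; simp [extW, hC, hw₀]
    have hDw : D.peval (extW ats w₀) = D.peval u :=
      peval_congr D (extW ats w₀) u fun C hC => by
        rw [hext C (hD hC), atom_peval D C hC]
    have hcw : ¬ ConW ats w₀ := by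
      intro hc
      rw [hsem w₀ hc] at hDw; exact hDu hDw.symm
    refine Or.inr ⟨w₀, by simp [hl], ?_⟩
    simp only [hg, if_neg hcw, MF.peval, Bool.not_eq_false']
    rw [peval_conj]
    intro B hB
    exact (hext B (Finset.mem_toList.mp hB)).symm

/-- soundness of provable formulas at consistent worlds (atoms within ats) -/
lemma con_sound (w : World ats) (hw : ConW ats w) (E : MF) (hE : atomsOf E ⊆ ats)
    (hp : END E) : E.peval (extW ats w) = true := by
  by_contra hfalse
  apply hw
  refine END.mp (END.taut ?_) hp
  intro u
  simp only [MF.peval]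
  by_cases hEu : E.peval u = true
  · -- then conj must be false at u
    suffices hs : (conj (extW ats w) ats.toList).peval u = false by rw [hEu, hs]; rfl
    by_contra hcj
    have hcj' : (conj (extW ats w) ats.toList).peval u = true := by
      revert hcj; cases (conj (extW ats w) ats.toList).peval u <;> simp
    rw [peval_conj] at hcj'
    have : E.peval u = E.peval (extW ats w) := by
      refine peval_congr E u (extW ats w) fun C hC => ?_
      have hCa : C ∈ ats := hE hC
      rw [← atom_peval E C hC u, hcj' C (Finset.mem_toList.mpr hCa)]
    rw [hEu] at this; exact hfalse this.symm
  · rw [Bool.not_eq_true] at hEu; rw [hEu]; rfl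

end Worlds


section Canon
variable (ats : Finset MF)

def CW := {w : World ats // ConW ats w}

instance : Finite (CW ats) := by
  unfold CW
  have : Finite (World ats) := Finite.of_fintype _
  exact Subtype.finite

def TS (B : MF) : Set (CW ats) := {x | B.peval (extW ats x.1) = true}

lemma mem_TS {B : MF} {x : CW ats} : x ∈ TS ats B ↔ B.peval (extW ats x.1) = true :=
  Iff.rfl

def canF : ENFrame (CW ats) :=
  ⟨fun x => {V | V = Set.univ ∨ ∃ B, MF.box B ∈ ats ∧ extW ats x.1 (MF.box B) = true ∧ V = TS ats B},
   fun _ => Or.inl rfl⟩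

/-- If `TS C` is empty then `¬□C` is provable. -/
lemma box_neg_prov (hcl : ∀ B : MF, MF.box B ∈ ats → atomsAll B ⊆ ats)
    (C : MF) (hbox : MF.box C ∈ ats) (hTS : TS ats C = ∅) :
    END C.box.neg := by
  have hnegC : END C.neg := by
    refine prov_of_sem ats C.neg (fun D hD => ?_) (fun w hw => ?_)
    · exact hcl C hbox (atomsOf_subset_atomsAll C (by simpa [atomsOf] using hD))
    · have h1 : (⟨w, hw⟩ : CW ats) ∉ TS ats C := by rw [hTS]; exact Set.notMem_empty _
      have h2 : ¬ (C.peval (extW ats w) = true) := h1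
      rw [Bool.not_eq_true] at h2
      simp only [MF.peval, h2]; rfl
  have hnb : END C.neg.box := END.nec hnegC
  have hax : END (C.box.and C.neg.box).neg := END.axD
  have htaut : END (C.neg.box.imp (((C.box.and C.neg.box).neg).imp C.box.neg)) := by
    refine END.taut (fun v => ?_)
    simp only [MF.peval]
    cases v C.neg.box <;> cases v C.box <;> rfl
  exact END.mp (END.mp htaut hnb) hax

/-- a consistent world cannot satisfy a provably-refuted box atom -/
lemma no_refuted_box (x : CW ats) (C : MF) (hmem : MF.box C ∈ ats)
    (hx : extW ats x.1 (MF.box C) = true) (hprov : END C.box.neg) : False := by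
  have := con_sound ats x.1 x.2 C.box.neg (by simpa [atomsOf] using hmem) hprov
  simp only [MF.peval, hx] at this
  exact absurd this (by simp)

/-- the canonical frame satisfies the END condition -/
lemma canF_isEND (hcl : ∀ B : MF, MF.box B ∈ ats → atomsAll B ⊆ ats)
    [Nonempty (CW ats)] : (canF ats).IsEND := by
  intro x V hV hVc
  simp only [canF, Set.mem_setOf_eq] at hV hVc
  rcases hV with rfl | ⟨B, hBmem, hBx, rfl⟩
  · -- V = univ, so Vᶜ = ∅
    rcases hVc with h | ⟨C, hCmem, hCx, hTC⟩
    · rw [Set.compl_univ] at h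
      exact Set.empty_ne_univ h
    · have hTC' : TS ats C = ∅ := by rw [← hTC, Set.compl_univ]
      exact no_refuted_box ats x C hCmem hCx (box_neg_prov ats hcl C hCmem hTC')
  · rcases hVc with h | ⟨C, hCmem, hCx, hTC⟩
    · -- (TS B)ᶜ = univ, so TS B = ∅
      have hTB : TS ats B = ∅ := by
        rw [← compl_compl (TS ats B), h, Set.compl_univ]
      exact no_refuted_box ats x B hBmem hBx (box_neg_prov ats hcl B hBmem hTB)
    · -- (TS B)ᶜ = TS C
      have hiff : END (C.iff B.neg) := by
        refine prov_of_sem ats (C.iff B.neg) ?_ (fun w hw => ?_)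
        · intro D hD
          simp only [MF.iff, atomsOf, Finset.mem_union] at hD
          rcases hD with (hD | hD) | (hD | hD) <;>
          first
          | exact hcl C hCmem (atomsOf_subset_atomsAll C hD)
          | exact hcl B hBmem (atomsOf_subset_atomsAll B hD)
        · have h1 : ¬ (B.peval (extW ats w) = true) ↔ C.peval (extW ats w) = true :=
            Set.ext_iff.mp hTC (⟨w, hw⟩ : CW ats)
          simp only [MF.iff, MF.peval]
          rcases hc : C.peval (extW ats w) <;> rcases hb : B.peval (extW ats w) <;>
            simp [hc, hb] at h1 ⊢
      have hre : END (C.box.iff B.neg.box) := END.re hiff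
      have hax : END (B.box.and B.neg.box).neg := END.axD
      have htaut : END ((C.box.iff B.neg.box).imp
          ((((B.box.and B.neg.box).neg)).imp ((B.box.and C.box).neg))) := by
        refine END.taut (fun v => ?_)
        simp only [MF.iff, MF.peval]
        cases v C.box <;> cases v B.neg.box <;> cases v B.box <;> rfl
      have hconc : END (B.box.and C.box).neg := END.mp (END.mp htaut hre) hax
      have := con_sound ats x.1 x.2 (B.box.and C.box).neg
        (by
          intro D hD
          simp only [atomsOf, Finset.mem_union, Finset.mem_singleton] at hD
          rcases hD with rfl | rfl <;> assumption) hconc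
      simp only [MF.peval, hBx, hCx] at this
      exact absurd this (by simp)

/-- the truth lemma -/
lemma truth_lemma (hcl : ∀ B : MF, MF.box B ∈ ats → atomsAll B ⊆ ats) :
    ∀ B : MF, atomsAll B ⊆ ats →
    (canF ats).truth (fun n => TS ats (MF.var n)) B = TS ats B := by
  intro B
  induction B with
  | var n => intro _; rfl
  | bot =>
    intro _
    ext x
    simp only [ENFrame.truth, mem_TS, MF.peval]
    simp
  | neg B ih =>
    intro hsub
    ext x
    simp only [ENFrame.truth, Set.mem_compl_iff,
      ih (by simpa [atomsAll] using hsub), mem_TS, MF.peval]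
    rcases hb : B.peval (extW ats x.1) <;> simp
  | and B C ihB ihC =>
    intro hsub
    simp only [atomsAll, Finset.union_subset_iff] at hsub
    ext x
    simp only [ENFrame.truth, Set.mem_inter_iff, ihB hsub.1, ihC hsub.2, mem_TS,
      MF.peval, Bool.and_eq_true]
  | or B C ihB ihC =>
    intro hsub
    simp only [atomsAll, Finset.union_subset_iff] at hsub
    ext x
    simp only [ENFrame.truth, Set.mem_union, ihB hsub.1, ihC hsub.2, mem_TS,
      MF.peval, Bool.or_eq_true]
  | imp B C ihB ihC =>
    intro hsub
    simp only [atomsAll, Finset.union_subset_iff] at hsub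
    ext x
    simp only [ENFrame.truth, Set.mem_setOf_eq, ihB hsub.1, ihC hsub.2, mem_TS,
      MF.peval, Bool.or_eq_true, Bool.not_eq_true']
    rcases hb : B.peval (extW ats x.1) <;> rcases hc : C.peval (extW ats x.1) <;> simp
  | box B ih =>
    intro hsub
    have hboxmem : MF.box B ∈ ats := hsub (by simp [atomsAll])
    have hBsub : atomsAll B ⊆ ats := by
      refine Finset.Subset.trans ?_ hsub
      simp [atomsAll, Finset.subset_insert]
    ext x
    simp only [ENFrame.truth, Set.mem_setOf_eq, ih hBsub, mem_TS, MF.peval]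
    constructor
    · intro hN
      have hN' : TS ats B = Set.univ ∨
          ∃ C, MF.box C ∈ ats ∧ extW ats x.1 (MF.box C) = true ∧ TS ats B = TS ats C := hN
      rcases hN' with huniv | ⟨C, hCmem, hCx, hTC⟩
      · -- TS B = univ : B provable, so □B provable, so true at x
        have hB : END B := by
          refine prov_of_sem ats B
            ((atomsOf_subset_atomsAll B).trans hBsub) (fun w hw => ?_)
          exact (mem_TS ats).mp (huniv ▸ Set.mem_univ (⟨w, hw⟩ : CW ats))
        have := con_sound ats x.1 x.2 B.box (by simpa [atomsOf] using hboxmem)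
          (END.nec hB)
        simpa [MF.peval] using this
      · -- TS B = TS C with □C true at x
        have hiff : END (B.iff C) := by
          refine prov_of_sem ats (B.iff C) ?_ (fun w hw => ?_)
          · intro D hD
            simp only [MF.iff, atomsOf, Finset.mem_union] at hD
            rcases hD with (hD | hD) | (hD | hD) <;>
            first
            | exact hBsub (atomsOf_subset_atomsAll B hD)
            | exact hcl C hCmem (atomsOf_subset_atomsAll C hD)
          · have h1 : B.peval (extW ats w) = true ↔ C.peval (extW ats w) = true :=
              Set.ext_iff.mp hTC (⟨w, hw⟩ : CW ats)
            simp only [MF.iff, MF.peval]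
            rcases hb : B.peval (extW ats w) <;> rcases hc : C.peval (extW ats w) <;>
              simp [hb, hc] at h1 ⊢
        have hre : END (B.box.iff C.box) := END.re hiff
        have := con_sound ats x.1 x.2 (B.box.iff C.box)
          (by
            intro D hD
            simp only [MF.iff, atomsOf, Finset.mem_union, Finset.mem_singleton] at hD
            rcases hD with (rfl | rfl) | (rfl | rfl) <;> assumption) hre
        simp only [MF.iff, MF.peval, hCx] at this
        rcases hb : extW ats x.1 B.box <;> simp [hb] at this ⊢
    · intro hx
      exact Or.inr ⟨B, hboxmem, hx, rfl⟩

end Canon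

/-- Completeness of END with respect to finite END-frames. -/
theorem END_completeness (A : MF)
    (h : ∀ (W : Type) [Nonempty W] [Finite W] (F : ENFrame W), F.IsEND → F.Valid A) :
    END A := by
  by_contra hA
  set ats := atomsAll A with hats
  have hcl : ∀ B : MF, MF.box B ∈ ats → atomsAll B ⊆ ats :=
    fun B hB => atomsAll_of_box_mem A B hB
  have hex : ∃ w : World ats, ConW ats w ∧ A.peval (extW ats w) = false := by
    by_contra hno
    push_neg at hno
    refine hA (prov_of_sem ats A (atomsOf_subset_atomsAll A) (fun w hw => ?_))
    cases hv : A.peval (extW ats w)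
    · exact absurd hv (hno w hw)
    · rfl
  obtain ⟨w0, hw0, hfalse⟩ := hex
  haveI : Nonempty (CW ats) := ⟨⟨w0, hw0⟩⟩
  have hval := h (CW ats) (canF ats) (canF_isEND ats hcl) (fun n => TS ats (MF.var n))
  rw [truth_lemma ats hcl A (Finset.Subset.refl ats)] at hval
  have hmem : (⟨w0, hw0⟩ : CW ats) ∈ TS ats A := hval ▸ Set.mem_univ _
  replace hmem := (mem_TS ats).mp hmem
  rw [hfalse] at hmem
  exact absurd hmem (by simp)
end

section
/- Completeness of ECN with respect to finite neighborhood frames: for every modal formula A, if A is valid in every finite ECN-frame (i.e., every ECN-frame whose set of worlds is finite), then A is derivable in the logic ECN. -/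
/-- The logic ECN: EN plus the axiom scheme □A ∧ □B → □(A ∧ B). -/
inductive ECN : MF → Prop
  | taut {A : MF} : A.Tautology → ECN A
  | axC {A B : MF} : ECN ((A.box.and B.box).imp (A.and B).box)
  | mp {A B : MF} : ECN (A.imp B) → ECN A → ECN B
  | nec {A : MF} : ECN A → ECN A.box
  | re {A B : MF} : ECN (A.iff B) → ECN (A.box.iff B.box)

-- ====== auxiliary development ======
deriving instance DecidableEq for MF

namespace MFaux

/-- Conjunction of a list (⊤ = ¬⊥ for empty). -/
def conjL : List MF → MF
  | [] => MF.bot.neg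
  | B :: L => B.and (conjL L)

def isAtom : MF → Bool
  | .var _ => true
  | .box _ => true
  | _ => false

def atoms : MF → List MF
  | .var n => [.var n]
  | .bot => []
  | .neg A => atoms A
  | .and A B => atoms A ++ atoms B
  | .or A B => atoms A ++ atoms B
  | .imp A B => atoms A ++ atoms B
  | .box A => [.box A]

def subs : MF → List MF
  | .var n => [.var n]
  | .bot => [.bot]
  | .neg A => .neg A :: subs A
  | .and A B => .and A B :: (subs A ++ subs B)
  | .or A B => .or A B :: (subs A ++ subs B)
  | .imp A B => .imp A B :: (subs A ++ subs B)
  | .box A => .box A :: subs A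

lemma self_mem_subs (B : MF) : B ∈ subs B := by
  cases B <;> simp [subs]

lemma subs_trans : ∀ (D : MF) {B C : MF}, B ∈ subs D → C ∈ subs B → C ∈ subs D := by
  intro D
  induction D with
  | var n => intro B C hB hC; simp [subs] at hB; subst hB; exact hC
  | bot => intro B C hB hC; simp [subs] at hB; subst hB; exact hC
  | neg A ih =>
    intro B C hB hC
    rcases (by simpa [subs] using hB : B = MF.neg A ∨ B ∈ subs A) with h | h
    · subst h; exact hC
    · simp [subs]; right; exact ih h hC
  | and A1 A2 ih1 ih2 =>
    intro B C hB hC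
    rcases (by simpa [subs] using hB : B = MF.and A1 A2 ∨ B ∈ subs A1 ∨ B ∈ subs A2) with h | h | h
    · subst h; exact hC
    · simp [subs]; right; left; exact ih1 h hC
    · simp [subs]; right; right; exact ih2 h hC
  | or A1 A2 ih1 ih2 =>
    intro B C hB hC
    rcases (by simpa [subs] using hB : B = MF.or A1 A2 ∨ B ∈ subs A1 ∨ B ∈ subs A2) with h | h | h
    · subst h; exact hC
    · simp [subs]; right; left; exact ih1 h hC
    · simp [subs]; right; right; exact ih2 h hC
  | imp A1 A2 ih1 ih2 =>
    intro B C hB hC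
    rcases (by simpa [subs] using hB : B = MF.imp A1 A2 ∨ B ∈ subs A1 ∨ B ∈ subs A2) with h | h | h
    · subst h; exact hC
    · simp [subs]; right; left; exact ih1 h hC
    · simp [subs]; right; right; exact ih2 h hC
  | box A ih =>
    intro B C hB hC
    rcases (by simpa [subs] using hB : B = MF.box A ∨ B ∈ subs A) with h | h
    · subst h; exact hC
    · simp [subs]; right; exact ih h hC

lemma atoms_subset_subs : ∀ (B : MF) {a : MF}, a ∈ atoms B → a ∈ subs B := by
  intro B
  induction B with
  | var n => intro a ha; simpa [atoms, subs] using ha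
  | bot => intro a ha; simp [atoms] at ha
  | neg A ih => intro a ha; simp only [atoms] at ha; simp [subs]; right; exact ih ha
  | and A1 A2 ih1 ih2 =>
    intro a ha; simp only [atoms, List.mem_append] at ha; simp [subs]
    rcases ha with h | h
    · right; left; exact ih1 h
    · right; right; exact ih2 h
  | or A1 A2 ih1 ih2 =>
    intro a ha; simp only [atoms, List.mem_append] at ha; simp [subs]
    rcases ha with h | h
    · right; left; exact ih1 h
    · right; right; exact ih2 h
  | imp A1 A2 ih1 ih2 =>
    intro a ha; simp only [atoms, List.mem_append] at ha; simp [subs]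
    rcases ha with h | h
    · right; left; exact ih1 h
    · right; right; exact ih2 h
  | box A ih => intro a ha; simp [atoms] at ha; simp [subs]; left; exact ha

lemma isAtom_of_mem_atoms : ∀ (B : MF) {a : MF}, a ∈ atoms B → isAtom a = true := by
  intro B
  induction B with
  | var n => intro a ha; simp [atoms] at ha; subst ha; rfl
  | bot => intro a ha; simp [atoms] at ha
  | neg A ih => intro a ha; exact ih (by simpa [atoms] using ha)
  | and A1 A2 ih1 ih2 =>
    intro a ha; simp [atoms] at ha
    rcases ha with h | h
    exacts [ih1 h, ih2 h]
  | or A1 A2 ih1 ih2 =>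
    intro a ha; simp [atoms] at ha
    rcases ha with h | h
    exacts [ih1 h, ih2 h]
  | imp A1 A2 ih1 ih2 =>
    intro a ha; simp [atoms] at ha
    rcases ha with h | h
    exacts [ih1 h, ih2 h]
  | box A ih => intro a ha; simp [atoms] at ha; subst ha; rfl

lemma peval_atom {a : MF} (h : isAtom a = true) (v : MF → Bool) : MF.peval v a = v a := by
  cases a <;> simp [isAtom] at h <;> rfl

lemma peval_congr : ∀ (B : MF) {v v' : MF → Bool},
    (∀ a ∈ atoms B, v a = v' a) → MF.peval v B = MF.peval v' B := by
  intro B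
  induction B with
  | var n => intro v v' h; exact h _ (by simp [atoms])
  | bot => intro v v' h; rfl
  | neg A ih => intro v v' h; simp only [MF.peval]; rw [ih h]
  | and A1 A2 ih1 ih2 =>
    intro v v' h; simp only [MF.peval]
    rw [ih1 (fun a ha => h a (by simp [atoms, ha])), ih2 (fun a ha => h a (by simp [atoms, ha]))]
  | or A1 A2 ih1 ih2 =>
    intro v v' h; simp only [MF.peval]
    rw [ih1 (fun a ha => h a (by simp [atoms, ha])), ih2 (fun a ha => h a (by simp [atoms, ha]))]
  | imp A1 A2 ih1 ih2 =>
    intro v v' h; simp only [MF.peval]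
    rw [ih1 (fun a ha => h a (by simp [atoms, ha])), ih2 (fun a ha => h a (by simp [atoms, ha]))]
  | box A ih => intro v v' h; exact h _ (by simp [atoms])

lemma peval_conjL (v : MF → Bool) : ∀ (L : List MF),
    (MF.peval v (conjL L) = true ↔ ∀ C ∈ L, MF.peval v C = true) := by
  intro L
  induction L with
  | nil => simp [conjL, MF.peval]
  | cons C L ih => simp [conjL, MF.peval, ih]

def lit (w : MF → Bool) (B : MF) : MF := if MF.peval w B then B else B.neg

def chi (w : MF → Bool) (L : List MF) : MF := conjL (L.map (lit w))

def Con (φ : MF) : Prop := ¬ ECN φ.neg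

-- ===== derivation toolkit =====

lemma mp2 {X Y Z : MF} (h : ECN (X.imp (Y.imp Z))) (hx : ECN X) (hy : ECN Y) : ECN Z :=
  (h.mp hx).mp hy

lemma and_left (X Y : MF) : ECN ((X.and Y).imp X) := by
  apply ECN.taut
  intro v; simp only [MF.peval]
  cases MF.peval v X <;> cases MF.peval v Y <;> rfl

lemma and_right (X Y : MF) : ECN ((X.and Y).imp Y) := by
  apply ECN.taut
  intro v; simp only [MF.peval]
  cases MF.peval v X <;> cases MF.peval v Y <;> rfl

lemma der_trans {X Y Z : MF} (h1 : ECN (X.imp Y)) (h2 : ECN (Y.imp Z)) : ECN (X.imp Z) := by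
  have t : MF.Tautology ((X.imp Y).imp ((Y.imp Z).imp (X.imp Z))) := by
    intro v; simp only [MF.peval]
    cases MF.peval v X <;> cases MF.peval v Y <;> cases MF.peval v Z <;> rfl
  exact mp2 (ECN.taut t) h1 h2

lemma der_and_intro {X Y Z : MF} (h1 : ECN (X.imp Y)) (h2 : ECN (X.imp Z)) :
    ECN (X.imp (Y.and Z)) := by
  have t : MF.Tautology ((X.imp Y).imp ((X.imp Z).imp (X.imp (Y.and Z)))) := by
    intro v; simp only [MF.peval]
    cases MF.peval v X <;> cases MF.peval v Y <;> cases MF.peval v Z <;> rfl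
  exact mp2 (ECN.taut t) h1 h2

lemma der_absurd {X Y : MF} (h1 : ECN (X.imp Y)) (h2 : ECN (X.imp Y.neg)) : ECN X.neg := by
  have t : MF.Tautology ((X.imp Y).imp ((X.imp Y.neg).imp X.neg)) := by
    intro v; simp only [MF.peval]
    cases MF.peval v X <;> cases MF.peval v Y <;> rfl
  exact mp2 (ECN.taut t) h1 h2

lemma der_top (X : MF) : ECN (X.imp MF.bot.neg) := by
  apply ECN.taut
  intro v; simp only [MF.peval]
  cases MF.peval v X <;> rfl

lemma der_of_thm {X Y : MF} (h : ECN Y) : ECN (X.imp Y) := by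
  have t : MF.Tautology (Y.imp (X.imp Y)) := by
    intro v; simp only [MF.peval]
    cases MF.peval v X <;> cases MF.peval v Y <;> rfl
  exact (ECN.taut t).mp h

lemma con_split {φ B : MF} (h : Con φ) : Con (φ.and B) ∨ Con (φ.and B.neg) := by
  by_contra hc
  push_neg at hc
  rcases hc with ⟨h1, h2⟩
  rw [Con, not_not] at h1 h2
  have t : MF.Tautology ((φ.and B).neg.imp ((φ.and B.neg).neg.imp φ.neg)) := by
    intro v; simp only [MF.peval]
    cases MF.peval v φ <;> cases MF.peval v B <;> rfl
  exact h (mp2 (ECN.taut t) h1 h2)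

lemma con_weaken_right {φ ψ : MF} (h : Con (φ.and ψ)) : Con ψ := by
  intro hψ
  have t : MF.Tautology (ψ.neg.imp (φ.and ψ).neg) := by
    intro v; simp only [MF.peval]
    cases MF.peval v φ <;> cases MF.peval v ψ <;> rfl
  exact h ((ECN.taut t).mp hψ)

lemma con_assoc {φ B χ : MF} (h : Con ((φ.and B).and χ)) : Con (φ.and (B.and χ)) := by
  intro hn
  have t : MF.Tautology ((φ.and (B.and χ)).neg.imp (((φ.and B).and χ).neg)) := by
    intro v; simp only [MF.peval]
    cases MF.peval v φ <;> cases MF.peval v B <;> cases MF.peval v χ <;> rfl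
  exact h ((ECN.taut t).mp hn)

lemma con_top_pad {φ : MF} (h : Con φ) : Con (φ.and MF.bot.neg) := by
  intro hn
  have t : MF.Tautology ((φ.and MF.bot.neg).neg.imp φ.neg) := by
    intro v; simp only [MF.peval]
    cases MF.peval v φ <;> rfl
  exact h ((ECN.taut t).mp hn)

lemma clash {χ ψ : MF} (h1 : ECN (χ.imp ψ)) (h2 : Con (ψ.neg.and χ)) : False := by
  apply h2
  have t : MF.Tautology ((χ.imp ψ).imp ((ψ.neg.and χ).neg)) := by
    intro v; simp only [MF.peval]
    cases MF.peval v χ <;> cases MF.peval v ψ <;> rfl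
  exact (ECN.taut t).mp h1

lemma con_neg_of_not_prov {X : MF} (h : ¬ ECN X) : Con X.neg := by
  intro hn
  have t : MF.Tautology (X.neg.neg.imp X) := by
    intro v; simp only [MF.peval]
    cases MF.peval v X <;> rfl
  exact h ((ECN.taut t).mp hn)

lemma proj {B : MF} : ∀ {L : List MF}, B ∈ L → ECN ((conjL L).imp B) := by
  intro L
  induction L with
  | nil => intro h; simp at h
  | cons C L ih =>
    intro h
    rcases List.mem_cons.mp h with h | h
    · subst h; exact and_left _ _
    · exact der_trans (and_right C (conjL L)) (ih h)

lemma der_conj_box : ∀ (L : List MF) {χ : MF},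
    (∀ C ∈ L, ECN (χ.imp C.box)) → ECN (χ.imp (conjL L).box) := by
  intro L
  induction L with
  | nil =>
    intro χ _
    apply der_of_thm
    apply ECN.nec
    apply ECN.taut
    intro v; simp [MF.peval, conjL]
  | cons C L ih =>
    intro χ h
    have h1 : ECN (χ.imp (C.box.and (conjL L).box)) :=
      der_and_intro (h C (by simp)) (ih (fun D hD => h D (by simp [hD])))
    exact der_trans h1 ECN.axC

lemma der_iff_box {B K χ : MF} (hiff : ECN (B.iff K)) (h : ECN (χ.imp K.box)) :
    ECN (χ.imp B.box) := by
  have hbx : ECN (B.box.iff K.box) := ECN.re hiff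
  have t : MF.Tautology ((B.box.iff K.box).imp ((χ.imp K.box).imp (χ.imp B.box))) := by
    intro v; simp only [MF.peval, MF.iff]
    cases v B.box <;> cases v K.box <;> cases MF.peval v χ <;> rfl
  exact mp2 (ECN.taut t) hbx h

/-- The atomic literals decide every formula whose atoms are listed. -/
lemma chi_der (w : MF → Bool) (L : List MF) : ∀ (B : MF),
    (∀ a ∈ atoms B, a ∈ L) → ECN ((chi w L).imp (lit w B)) := by
  intro B
  induction B with
  | var n =>
    intro h
    exact proj (List.mem_map_of_mem (f := lit w) (h _ (by simp [atoms])))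
  | bot =>
    intro _
    have : lit w MF.bot = MF.bot.neg := by simp [lit, MF.peval]
    rw [this]; exact der_top _
  | box C _ =>
    intro h
    exact proj (List.mem_map_of_mem (f := lit w) (h _ (by simp [atoms])))
  | neg C ih =>
    intro h
    have ihc := ih (fun a ha => h a (by simpa [atoms] using ha))
    cases hc : MF.peval w C with
    | true =>
      simp only [lit, hc, if_true] at ihc
      have hl : lit w C.neg = C.neg.neg := by simp [lit, MF.peval, hc]
      rw [hl]
      have t : MF.Tautology (((chi w L).imp C).imp ((chi w L).imp C.neg.neg)) := by
        intro v; simp only [MF.peval]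
        cases MF.peval v (chi w L) <;> cases MF.peval v C <;> rfl
      exact (ECN.taut t).mp ihc
    | false =>
      simp only [lit, hc, if_false] at ihc
      have hl : lit w C.neg = C.neg := by simp [lit, MF.peval, hc]
      rw [hl]; simpa using ihc
  | and C D ihC ihD =>
    intro h
    have ihc := ihC (fun a ha => h a (by simp [atoms, ha]))
    have ihd := ihD (fun a ha => h a (by simp [atoms, ha]))
    cases hc : MF.peval w C with
    | true =>
      simp only [lit, hc, if_true] at ihc
      cases hd : MF.peval w D with
      | true =>
        simp only [lit, hd, if_true] at ihd
        have hl : lit w (C.and D) = C.and D := by simp [lit, MF.peval, hc, hd]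
        rw [hl]; exact der_and_intro ihc ihd
      | false =>
        simp only [lit, hd, if_false] at ihd
        have hl : lit w (C.and D) = (C.and D).neg := by simp [lit, MF.peval, hc, hd]
        rw [hl]
        have t : MF.Tautology (((chi w L).imp D.neg).imp ((chi w L).imp (C.and D).neg)) := by
          intro v; simp only [MF.peval]
          cases MF.peval v (chi w L) <;> cases MF.peval v C <;> cases MF.peval v D <;> rfl
        exact (ECN.taut t).mp ihd
    | false =>
      simp only [lit, hc, if_false] at ihc
      have hl : lit w (C.and D) = (C.and D).neg := by simp [lit, MF.peval, hc]
      rw [hl]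
      have t : MF.Tautology (((chi w L).imp C.neg).imp ((chi w L).imp (C.and D).neg)) := by
        intro v; simp only [MF.peval]
        cases MF.peval v (chi w L) <;> cases MF.peval v C <;> cases MF.peval v D <;> rfl
      exact (ECN.taut t).mp ihc
  | or C D ihC ihD =>
    intro h
    have ihc := ihC (fun a ha => h a (by simp [atoms, ha]))
    have ihd := ihD (fun a ha => h a (by simp [atoms, ha]))
    cases hc : MF.peval w C with
    | true =>
      simp only [lit, hc, if_true] at ihc
      have hl : lit w (C.or D) = C.or D := by simp [lit, MF.peval, hc]
      rw [hl]
      have t : MF.Tautology (((chi w L).imp C).imp ((chi w L).imp (C.or D))) := by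
        intro v; simp only [MF.peval]
        cases MF.peval v (chi w L) <;> cases MF.peval v C <;> cases MF.peval v D <;> rfl
      exact (ECN.taut t).mp ihc
    | false =>
      simp only [lit, hc, if_false] at ihc
      cases hd : MF.peval w D with
      | true =>
        simp only [lit, hd, if_true] at ihd
        have hl : lit w (C.or D) = C.or D := by simp [lit, MF.peval, hc, hd]
        rw [hl]
        have t : MF.Tautology (((chi w L).imp D).imp ((chi w L).imp (C.or D))) := by
          intro v; simp only [MF.peval]
          cases MF.peval v (chi w L) <;> cases MF.peval v C <;> cases MF.peval v D <;> rfl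
        exact (ECN.taut t).mp ihd
      | false =>
        simp only [lit, hd, if_false] at ihd
        have hl : lit w (C.or D) = (C.or D).neg := by simp [lit, MF.peval, hc, hd]
        rw [hl]
        have t : MF.Tautology (((chi w L).imp C.neg).imp
            (((chi w L).imp D.neg).imp ((chi w L).imp (C.or D).neg))) := by
          intro v; simp only [MF.peval]
          cases MF.peval v (chi w L) <;> cases MF.peval v C <;> cases MF.peval v D <;> rfl
        exact mp2 (ECN.taut t) ihc ihd
  | imp C D ihC ihD =>
    intro h
    have ihc := ihC (fun a ha => h a (by simp [atoms, ha]))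
    have ihd := ihD (fun a ha => h a (by simp [atoms, ha]))
    cases hc : MF.peval w C with
    | false =>
      simp only [lit, hc, if_false] at ihc
      have hl : lit w (C.imp D) = C.imp D := by simp [lit, MF.peval, hc]
      rw [hl]
      have t : MF.Tautology (((chi w L).imp C.neg).imp ((chi w L).imp (C.imp D))) := by
        intro v; simp only [MF.peval]
        cases MF.peval v (chi w L) <;> cases MF.peval v C <;> cases MF.peval v D <;> rfl
      exact (ECN.taut t).mp ihc
    | true =>
      simp only [lit, hc, if_true] at ihc
      cases hd : MF.peval w D with
      | true =>
        simp only [lit, hd, if_true] at ihd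
        have hl : lit w (C.imp D) = C.imp D := by simp [lit, MF.peval, hc, hd]
        rw [hl]
        have t : MF.Tautology (((chi w L).imp D).imp ((chi w L).imp (C.imp D))) := by
          intro v; simp only [MF.peval]
          cases MF.peval v (chi w L) <;> cases MF.peval v C <;> cases MF.peval v D <;> rfl
        exact (ECN.taut t).mp ihd
      | false =>
        simp only [lit, hd, if_false] at ihd
        have hl : lit w (C.imp D) = (C.imp D).neg := by simp [lit, MF.peval, hc, hd]
        rw [hl]
        have t : MF.Tautology (((chi w L).imp C).imp
            (((chi w L).imp D.neg).imp ((chi w L).imp (C.imp D).neg))) := by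
          intro v; simp only [MF.peval]
          cases MF.peval v (chi w L) <;> cases MF.peval v C <;> cases MF.peval v D <;> rfl
        exact mp2 (ECN.taut t) ihc ihd

end MFaux
namespace MFaux

/-- Finite Lindenbaum lemma over a duplicate-free list of atoms. -/
lemma lind : ∀ (L : List MF), L.Nodup → (∀ a ∈ L, isAtom a = true) →
    ∀ {φ : MF}, Con φ → ∃ w : MF → Bool, Con (φ.and (chi w L)) := by
  intro L
  induction L with
  | nil =>
    intro _ _ φ h
    exact ⟨fun _ => true, con_top_pad h⟩
  | cons B L ih =>
    intro hnd hat φ h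
    have hBL : B ∉ L := (List.nodup_cons.mp hnd).1
    have hndL : L.Nodup := (List.nodup_cons.mp hnd).2
    have hatL : ∀ a ∈ L, isAtom a = true := fun a ha => hat a (by simp [ha])
    have hatB : isAtom B = true := hat B (by simp)
    rcases con_split (B := B) h with hc | hc
    · obtain ⟨w, hw⟩ := ih hndL hatL hc
      refine ⟨fun C => if C = B then true else w C, ?_⟩
      have hlit : chi (fun C => if C = B then true else w C) (B :: L)
          = B.and (chi w L) := by
        show conjL ((B :: L).map (lit _)) = _
        simp only [List.map_cons, conjL]
        congr 1
        · show lit _ B = B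
          unfold lit
          rw [peval_atom hatB]
          simp
        · show conjL (L.map (lit _)) = conjL (L.map (lit w))
          congr 1
          apply List.map_congr_left
          intro C hC
          have hne : C ≠ B := fun he => hBL (he ▸ hC)
          unfold lit
          rw [peval_atom (hatL C hC), peval_atom (hatL C hC)]
          simp [hne]
      rw [hlit]
      exact con_assoc hw
    · obtain ⟨w, hw⟩ := ih hndL hatL hc
      refine ⟨fun C => if C = B then false else w C, ?_⟩
      have hlit : chi (fun C => if C = B then false else w C) (B :: L)
          = B.neg.and (chi w L) := by
        show conjL ((B :: L).map (lit _)) = _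
        simp only [List.map_cons, conjL]
        congr 1
        · show lit _ B = B.neg
          unfold lit
          rw [peval_atom hatB]
          simp
        · show conjL (L.map (lit _)) = conjL (L.map (lit w))
          congr 1
          apply List.map_congr_left
          intro C hC
          have hne : C ≠ B := fun he => hBL (he ▸ hC)
          unfold lit
          rw [peval_atom (hatL C hC), peval_atom (hatL C hC)]
          simp [hne]
      rw [hlit]
      exact con_assoc hw

-- ===== the finite canonical model =====

/-- The list of atoms (variables and boxed formulas) occurring in `A`, without duplicates. -/
def AtL (A : MF) : List MF := ((subs A).filter isAtom).dedup

lemma AtL_nodup (A : MF) : (AtL A).Nodup := List.nodup_dedup _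

lemma AtL_atoms (A : MF) : ∀ a ∈ AtL A, isAtom a = true := by
  intro a ha
  rw [AtL, List.mem_dedup, List.mem_filter] at ha
  exact ha.2

lemma mem_AtL {A B : MF} (h1 : B ∈ subs A) (h2 : isAtom B = true) : B ∈ AtL A := by
  rw [AtL, List.mem_dedup, List.mem_filter]
  exact ⟨h1, h2⟩

lemma atoms_mem_AtL {A B : MF} (hB : B ∈ subs A) : ∀ a ∈ atoms B, a ∈ AtL A :=
  fun a ha => mem_AtL (subs_trans A hB (atoms_subset_subs B ha)) (isAtom_of_mem_atoms B ha)

def extf (A : MF) (f : {B : MF // B ∈ AtL A} → Bool) : MF → Bool :=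
  fun B => if h : B ∈ AtL A then f ⟨B, h⟩ else false

/-- Worlds: consistent assignments to atoms of `A`. -/
def Wld (A : MF) : Type := {f : {B : MF // B ∈ AtL A} → Bool // Con (chi (extf A f) (AtL A))}

def wv (A : MF) (u : Wld A) : MF → Bool := extf A u.1

lemma chi_restrict (A : MF) (w : MF → Bool) :
    chi (extf A (fun a : {B : MF // B ∈ AtL A} => w a.1)) (AtL A) = chi w (AtL A) := by
  unfold chi
  congr 1
  apply List.map_congr_left
  intro a ha
  have hat := AtL_atoms A a ha
  unfold lit
  rw [peval_atom hat, peval_atom hat]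
  simp [extf, dif_pos ha]

def mkW (A : MF) (w : MF → Bool) (hw : Con (chi w (AtL A))) : Wld A :=
  ⟨fun a => w a.1, by rw [chi_restrict]; exact hw⟩

lemma peval_mkW (A : MF) (w : MF → Bool) {D : MF} (hD : ∀ a ∈ atoms D, a ∈ AtL A)
    (hw : Con (chi w (AtL A))) :
    MF.peval (wv A (mkW A w hw)) D = MF.peval w D := by
  apply peval_congr
  intro a ha
  show extf A (fun a : {B : MF // B ∈ AtL A} => w a.1) a = w a
  simp [extf, dif_pos (hD a ha)]

lemma world_con (A : MF) (u : Wld A) : Con (chi (wv A u) (AtL A)) := u.2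

def frameOf (A : MF) : ENFrame (Wld A) where
  N x := {X | ∃ L : List MF,
    (∀ C ∈ L, MF.box C ∈ subs A ∧ MF.peval (wv A x) (MF.box C) = true) ∧
    X = {t : Wld A | ∀ C ∈ L, MF.peval (wv A t) C = true}}
  univ_mem x := ⟨[], by simp, by ext t; simp⟩

lemma frame_isECN (A : MF) : (frameOf A).IsECN := by
  intro x U V hU hV
  obtain ⟨L1, h1, rfl⟩ := hU
  obtain ⟨L2, h2, rfl⟩ := hV
  refine ⟨L1 ++ L2, ?_, ?_⟩
  · intro C hC
    rcases List.mem_append.mp hC with h | h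
    exacts [h1 C h, h2 C h]
  · ext t
    simp only [Set.mem_inter_iff, Set.mem_setOf_eq, List.mem_append]
    exact ⟨fun ⟨a, b⟩ C hC => hC.elim (a C) (b C),
      fun hq => ⟨fun C hC => hq C (Or.inl hC), fun C hC => hq C (Or.inr hC)⟩⟩

def valOf (A : MF) : ℕ → Set (Wld A) := fun n => {u : Wld A | wv A u (MF.var n) = true}

lemma atoms_conjL : ∀ (L : List MF) {a : MF}, a ∈ atoms (conjL L) → ∃ D ∈ L, a ∈ atoms D := by
  intro L
  induction L with
  | nil => intro a ha; simp [conjL, atoms] at ha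
  | cons D L ih =>
    intro a ha
    simp only [conjL, atoms, List.mem_append] at ha
    rcases ha with h | h
    · exact ⟨D, by simp, h⟩
    · obtain ⟨E, hE, hae⟩ := ih h
      exact ⟨E, by simp [hE], hae⟩

/-- Semantic equivalence over all worlds yields a provable biconditional. -/
lemma sem_iff (A : MF) {B K : MF} (hB : ∀ a ∈ atoms B, a ∈ AtL A)
    (hK : ∀ a ∈ atoms K, a ∈ AtL A)
    (hsem : ∀ u : Wld A, MF.peval (wv A u) B = MF.peval (wv A u) K) : ECN (B.iff K) := by
  by_contra hn
  have hcon : Con ((B.iff K).neg) := con_neg_of_not_prov hn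
  obtain ⟨w, hw⟩ := lind (AtL A) (AtL_nodup A) (AtL_atoms A) hcon
  have hwc : Con (chi w (AtL A)) := con_weaken_right hw
  have hiffatoms : ∀ a ∈ atoms (B.iff K), a ∈ AtL A := by
    intro a ha
    simp only [MF.iff, atoms, List.mem_append] at ha
    rcases ha with (h | h) | (h | h)
    exacts [hB a h, hK a h, hK a h, hB a h]
  have hBeq := peval_mkW A w hB hwc
  have hKeq := peval_mkW A w hK hwc
  have hpe : MF.peval w (B.iff K) = true := by
    have hu := hsem (mkW A w hwc)
    rw [hBeq, hKeq] at hu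
    simp only [MF.iff, MF.peval, hu]
    cases MF.peval w K <;> rfl
  have hder : ECN ((chi w (AtL A)).imp (B.iff K)) := by
    have h0 := chi_der w (AtL A) (B.iff K) hiffatoms
    rwa [lit, hpe, if_pos rfl] at h0
  exact clash hder hw

lemma truth_lemma (A : MF) : ∀ (B : MF), B ∈ subs A →
    (frameOf A).truth (valOf A) B = {u : Wld A | MF.peval (wv A u) B = true} := by
  intro B
  induction B with
  | var n => intro _; rfl
  | bot => intro _; ext u; simp [ENFrame.truth, MF.peval]
  | neg C ih =>
    intro h
    have hC : C ∈ subs A := subs_trans A h (by simp [subs, self_mem_subs])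
    ext u
    simp [ENFrame.truth, ih hC, MF.peval]
  | and C D ihC ihD =>
    intro h
    have hC : C ∈ subs A := subs_trans A h (by simp [subs, self_mem_subs])
    have hD : D ∈ subs A := subs_trans A h (by simp [subs, self_mem_subs])
    ext u
    simp [ENFrame.truth, ihC hC, ihD hD, MF.peval]
  | or C D ihC ihD =>
    intro h
    have hC : C ∈ subs A := subs_trans A h (by simp [subs, self_mem_subs])
    have hD : D ∈ subs A := subs_trans A h (by simp [subs, self_mem_subs])
    ext u
    simp [ENFrame.truth, ihC hC, ihD hD, MF.peval]
  | imp C D ihC ihD =>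
    intro h
    have hC : C ∈ subs A := subs_trans A h (by simp [subs, self_mem_subs])
    have hD : D ∈ subs A := subs_trans A h (by simp [subs, self_mem_subs])
    ext u
    simp only [ENFrame.truth, ihC hC, ihD hD, MF.peval, Set.mem_setOf_eq,
      Bool.or_eq_true, Bool.not_eq_true']
    cases hc : MF.peval (wv A u) C <;> cases hd : MF.peval (wv A u) D <;> simp
  | box C ih =>
    intro h
    have hC : C ∈ subs A := subs_trans A h (by simp [subs, self_mem_subs])
    ext x
    simp only [ENFrame.truth, Set.mem_setOf_eq, ih hC]
    constructor
    · rintro ⟨L, hL, hEq⟩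
      show MF.peval (wv A x) (MF.box C) = true
      by_contra hfalse
      have hfalse' : MF.peval (wv A x) (MF.box C) = false := by
        cases hb : MF.peval (wv A x) (MF.box C)
        · rfl
        · exact absurd hb hfalse
      have hnegbox : ECN ((chi (wv A x) (AtL A)).imp (MF.box C).neg) := by
        have h0 := chi_der (wv A x) (AtL A) (MF.box C) (atoms_mem_AtL h)
        rwa [lit, hfalse', if_neg (by simp)] at h0
      have hboxes : ∀ D ∈ L, ECN ((chi (wv A x) (AtL A)).imp (MF.box D)) := by
        intro D hD
        have h0 := chi_der (wv A x) (AtL A) (MF.box D) (atoms_mem_AtL (hL D hD).1)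
        rwa [lit, (hL D hD).2, if_pos rfl] at h0
      have hconj : ECN ((chi (wv A x) (AtL A)).imp (conjL L).box) := der_conj_box L hboxes
      have hconjatoms : ∀ a ∈ atoms (conjL L), a ∈ AtL A := by
        intro a ha
        obtain ⟨D, hD, haD⟩ := atoms_conjL L ha
        have hDs : D ∈ subs A :=
          subs_trans A (hL D hD).1 (by simp [subs, self_mem_subs])
        exact atoms_mem_AtL hDs a haD
      have hsem : ∀ u : Wld A, MF.peval (wv A u) C = MF.peval (wv A u) (conjL L) := by
        intro u
        have hmm := Set.ext_iff.mp hEq u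
        simp only [Set.mem_setOf_eq] at hmm
        have : (MF.peval (wv A u) C = true) ↔ (MF.peval (wv A u) (conjL L) = true) := by
          rw [peval_conjL]
          exact hmm
        cases h1 : MF.peval (wv A u) C <;> cases h2 : MF.peval (wv A u) (conjL L) <;>
          simp [h1, h2] at this ⊢
      have hiff : ECN (C.iff (conjL L)) := sem_iff A (atoms_mem_AtL hC) hconjatoms hsem
      have hboxder : ECN ((chi (wv A x) (AtL A)).imp (MF.box C)) := der_iff_box hiff hconj
      exact world_con A x (der_absurd hboxder hnegbox)
    · intro hb
      refine ⟨[C], ?_, ?_⟩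
      · intro D hD
        simp only [List.mem_singleton] at hD
        subst hD
        exact ⟨h, hb⟩
      · ext t; simp

end MFaux

/-- Completeness of ECN with respect to finite ECN-frames. -/
theorem ECN_completeness (A : MF)
    (h : ∀ (W : Type) [Nonempty W] [Finite W] (F : ENFrame W), F.IsECN → F.Valid A) :
    ECN A := by
  classical
  by_contra hA
  have hcon : MFaux.Con A.neg := MFaux.con_neg_of_not_prov hA
  obtain ⟨w, hw⟩ := MFaux.lind (MFaux.AtL A) (MFaux.AtL_nodup A) (MFaux.AtL_atoms A) hcon
  have hwc : MFaux.Con (MFaux.chi w (MFaux.AtL A)) := MFaux.con_weaken_right hw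
  let u : MFaux.Wld A := MFaux.mkW A w hwc
  haveI : Nonempty (MFaux.Wld A) := ⟨u⟩
  haveI hfin1 : Finite {B : MF // B ∈ MFaux.AtL A} :=
    Set.Finite.to_subtype ((MFaux.AtL A).finite_toSet)
  haveI : Finite (MFaux.Wld A) := by unfold MFaux.Wld; infer_instance
  have hval := h (MFaux.Wld A) (MFaux.frameOf A) (MFaux.frame_isECN A) (MFaux.valOf A)
  have hu : u ∈ (MFaux.frameOf A).truth (MFaux.valOf A) A := by rw [hval]; trivial
  rw [MFaux.truth_lemma A A (MFaux.self_mem_subs A)] at hu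
  have hu' : MF.peval (MFaux.wv A u) A = true := hu
  have hpe : MF.peval w A = true := by
    rw [MFaux.peval_mkW A w (MFaux.atoms_mem_AtL (MFaux.self_mem_subs A)) hwc] at hu'
    exact hu'
  have hder : ECN ((MFaux.chi w (MFaux.AtL A)).imp A) := by
    have h0 := MFaux.chi_der w (MFaux.AtL A) A (MFaux.atoms_mem_AtL (MFaux.self_mem_subs A))
    rwa [MFaux.lit, hpe, if_pos rfl] at h0
  exact MFaux.clash hder hw
end

section
/- Completeness of ECNP with respect to finite neighborhood frames: for every modal formula A, if A is valid in every finite ECNP-frame (i.e., every ECNP-frame whose set of worlds is finite), then A is derivable in the logic ECNP. -/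
/-- The logic ECNP: ECN plus the axiom ¬□⊥. -/
inductive ECNP : MF → Prop
  | taut {A : MF} : A.Tautology → ECNP A
  | axC {A B : MF} : ECNP ((A.box.and B.box).imp (A.and B).box)
  | axP : ECNP MF.bot.box.neg
  | mp {A B : MF} : ECNP (A.imp B) → ECNP A → ECNP B
  | nec {A : MF} : ECNP A → ECNP A.box
  | re {A B : MF} : ECNP (A.iff B) → ECNP (A.box.iff B.box)

/-! ### Auxiliary machinery -/

deriving instance DecidableEq for MF

namespace ECNPAux

/-- Conjunction of a list of formulas. -/
def conjL : List MF → MF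
  | [] => MF.bot.neg
  | x :: xs => x.and (conjL xs)

/-- Disjunction of a list of formulas. -/
def disjL : List MF → MF
  | [] => MF.bot
  | x :: xs => x.or (disjL xs)

lemma peval_conjL (v : MF → Bool) : ∀ L : List MF,
    (conjL L).peval v = L.all (fun B => B.peval v)
  | [] => by simp [conjL, MF.peval]
  | x :: xs => by simp [conjL, MF.peval, peval_conjL v xs]

lemma peval_disjL (v : MF → Bool) : ∀ L : List MF,
    (disjL L).peval v = L.any (fun B => B.peval v)
  | [] => by simp [disjL, MF.peval]
  | x :: xs => by simp [disjL, MF.peval, peval_disjL v xs]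

/-- The list of subformulas of a formula. -/
def subs : MF → List MF
  | .var n => [.var n]
  | .bot => [.bot]
  | .neg B => .neg B :: subs B
  | .and B C => .and B C :: (subs B ++ subs C)
  | .or B C => .or B C :: (subs B ++ subs C)
  | .imp B C => .imp B C :: (subs B ++ subs C)
  | .box B => .box B :: subs B

lemma self_mem_subs : ∀ B : MF, B ∈ subs B := by
  intro B; cases B <;> simp [subs]

lemma subs_subs : ∀ B C : MF, C ∈ subs B → subs C ⊆ subs B := by
  intro B
  induction B with
  | var n => intro C hC; simp [subs] at hC; subst hC; exact fun x hx => hx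
  | bot => intro C hC; simp [subs] at hC; subst hC; exact fun x hx => hx
  | neg B ih =>
    intro C hC
    rcases List.mem_cons.1 hC with h | h
    · subst h; exact fun x hx => hx
    · exact fun x hx => List.mem_cons_of_mem _ (ih C h hx)
  | and B C ihB ihC =>
    intro D hD
    rcases List.mem_cons.1 hD with h | h
    · subst h; exact fun x hx => hx
    · rcases List.mem_append.1 h with h' | h'
      · exact fun x hx => List.mem_cons_of_mem _ (List.mem_append.2 (Or.inl (ihB D h' hx)))
      · exact fun x hx => List.mem_cons_of_mem _ (List.mem_append.2 (Or.inr (ihC D h' hx)))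
  | or B C ihB ihC =>
    intro D hD
    rcases List.mem_cons.1 hD with h | h
    · subst h; exact fun x hx => hx
    · rcases List.mem_append.1 h with h' | h'
      · exact fun x hx => List.mem_cons_of_mem _ (List.mem_append.2 (Or.inl (ihB D h' hx)))
      · exact fun x hx => List.mem_cons_of_mem _ (List.mem_append.2 (Or.inr (ihC D h' hx)))
  | imp B C ihB ihC =>
    intro D hD
    rcases List.mem_cons.1 hD with h | h
    · subst h; exact fun x hx => hx
    · rcases List.mem_append.1 h with h' | h'
      · exact fun x hx => List.mem_cons_of_mem _ (List.mem_append.2 (Or.inl (ihB D h' hx)))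
      · exact fun x hx => List.mem_cons_of_mem _ (List.mem_append.2 (Or.inr (ihC D h' hx)))
  | box B ih =>
    intro C hC
    rcases List.mem_cons.1 hC with h | h
    · subst h; exact fun x hx => hx
    · exact fun x hx => List.mem_cons_of_mem _ (ih C h hx)

lemma mem_subs_of_neg {A B : MF} (h : B.neg ∈ subs A) : B ∈ subs A :=
  subs_subs A _ h (List.mem_cons_of_mem _ (self_mem_subs B))

lemma mem_subs_of_and_left {A B C : MF} (h : B.and C ∈ subs A) : B ∈ subs A :=
  subs_subs A _ h (List.mem_cons_of_mem _ (List.mem_append.2 (Or.inl (self_mem_subs B))))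

lemma mem_subs_of_and_right {A B C : MF} (h : B.and C ∈ subs A) : C ∈ subs A :=
  subs_subs A _ h (List.mem_cons_of_mem _ (List.mem_append.2 (Or.inr (self_mem_subs C))))

lemma mem_subs_of_or_left {A B C : MF} (h : B.or C ∈ subs A) : B ∈ subs A :=
  subs_subs A _ h (List.mem_cons_of_mem _ (List.mem_append.2 (Or.inl (self_mem_subs B))))

lemma mem_subs_of_or_right {A B C : MF} (h : B.or C ∈ subs A) : C ∈ subs A :=
  subs_subs A _ h (List.mem_cons_of_mem _ (List.mem_append.2 (Or.inr (self_mem_subs C))))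

lemma mem_subs_of_imp_left {A B C : MF} (h : B.imp C ∈ subs A) : B ∈ subs A :=
  subs_subs A _ h (List.mem_cons_of_mem _ (List.mem_append.2 (Or.inl (self_mem_subs B))))

lemma mem_subs_of_imp_right {A B C : MF} (h : B.imp C ∈ subs A) : C ∈ subs A :=
  subs_subs A _ h (List.mem_cons_of_mem _ (List.mem_append.2 (Or.inr (self_mem_subs C))))

lemma mem_subs_of_box {A B : MF} (h : B.box ∈ subs A) : B ∈ subs A :=
  subs_subs A _ h (List.mem_cons_of_mem _ (self_mem_subs B))

end ECNPAux

namespace ECNPAux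

variable (A : MF)

/-- The state description of a set `s` of subformulas of `A`. -/
def δ (s : Finset MF) : MF :=
  conjL ((subs A).map (fun B => if B ∈ s then B else B.neg))

/-- `s` is ECNP-consistent. -/
def Con (s : Finset MF) : Prop := ¬ ECNP ((δ A s).imp .bot)

/-- The state determined by a propositional valuation. -/
def st (v : MF → Bool) : Finset MF :=
  (subs A).toFinset.filter (fun B => B.peval v = true)

lemma mem_st {v : MF → Bool} {B : MF} :
    B ∈ st A v ↔ B ∈ subs A ∧ B.peval v = true := by
  simp [st, List.mem_toFinset]

lemma peval_delta {v : MF → Bool} {s : Finset MF} :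
    (δ A s).peval v = true ↔ ∀ B ∈ subs A, (B ∈ s ↔ B.peval v = true) := by
  classical
  rw [δ, peval_conjL, List.all_eq_true]
  constructor
  · intro h B hB
    have := h _ (List.mem_map.2 ⟨B, hB, rfl⟩)
    by_cases hs : B ∈ s <;> simp [hs, MF.peval] at this ⊢
    · exact this
    · simpa [Bool.not_eq_true] using this
  · intro h x hx
    rcases List.mem_map.1 hx with ⟨B, hB, rfl⟩
    by_cases hs : B ∈ s <;> simp [hs, MF.peval]
    · exact (h B hB).1 hs
    · simpa [Bool.not_eq_true] using fun hc => hs ((h B hB).2 hc)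

lemma st_delta (v : MF → Bool) : (δ A (st A v)).peval v = true :=
  (peval_delta A).2 (fun B hB => by simp [mem_st, hB])

lemma st_subset (v : MF → Bool) : st A v ⊆ (subs A).toFinset :=
  Finset.filter_subset _ _

lemma delta_st {v : MF → Bool} {s : Finset MF} (hs : s ⊆ (subs A).toFinset)
    (h : (δ A s).peval v = true) : s = st A v := by
  ext B
  rw [mem_st]
  constructor
  · intro hB
    have hB' : B ∈ subs A := List.mem_toFinset.1 (hs hB)
    exact ⟨hB', ((peval_delta A).1 h B hB').1 hB⟩
  · rintro ⟨hB', hpe⟩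
    exact ((peval_delta A).1 h B hB').2 hpe

/-- If `s` describes an unsatisfiable state, its description is refutable. -/
lemma incon_of {s : Finset MF}
    (h : ∀ v : MF → Bool, (∀ B ∈ subs A, (B ∈ s ↔ B.peval v = true)) → False) :
    ECNP ((δ A s).imp .bot) := by
  apply ECNP.taut
  intro v
  simp only [MF.peval]
  cases hd : (δ A s).peval v
  · rfl
  · exact absurd ((peval_delta A).1 hd) (fun hh => h v hh)

end ECNPAux

namespace ECNPAux

lemma imp_trans {X Y Z : MF} (h1 : ECNP (X.imp Y)) (h2 : ECNP (Y.imp Z)) :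
    ECNP (X.imp Z) := by
  refine ECNP.mp (ECNP.mp (ECNP.taut ?_) h1) h2
  intro v
  simp only [MF.peval]
  cases X.peval v <;> cases Y.peval v <;> cases Z.peval v <;> rfl

lemma weaken_bot {X Y : MF} (h : ECNP (X.imp .bot)) : ECNP (X.imp Y) := by
  refine ECNP.mp (ECNP.taut ?_) h
  intro v
  simp only [MF.peval]
  cases X.peval v <;> cases Y.peval v <;> rfl

lemma or_elimL {φ : MF} : ∀ L : List MF, (∀ p ∈ L, ECNP (p.imp φ)) →
    ECNP ((disjL L).imp φ)
  | [], _ => ECNP.taut (fun v => by simp [disjL, MF.peval])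
  | x :: xs, h => by
    have hx : ECNP (x.imp φ) := h x List.mem_cons_self
    have hxs : ECNP ((disjL xs).imp φ) :=
      or_elimL xs (fun p hp => h p (List.mem_cons_of_mem _ hp))
    refine ECNP.mp (ECNP.mp (ECNP.taut ?_) hx) hxs
    intro v
    simp only [disjL, MF.peval]
    cases x.peval v <;> cases (disjL xs).peval v <;> cases φ.peval v <;> rfl

lemma iff_intro {X Y : MF} (h1 : ECNP (X.imp Y)) (h2 : ECNP (Y.imp X)) :
    ECNP (X.iff Y) := by
  refine ECNP.mp (ECNP.mp (ECNP.taut ?_) h1) h2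
  intro v
  simp only [MF.iff, MF.peval]
  cases X.peval v <;> cases Y.peval v <;> rfl

lemma iff_elim₁ {X Y : MF} (h : ECNP (X.iff Y)) : ECNP (X.imp Y) := by
  refine ECNP.mp (ECNP.taut ?_) h
  intro v
  simp only [MF.iff, MF.peval]
  cases X.peval v <;> cases Y.peval v <;> rfl

lemma iff_elim₂ {X Y : MF} (h : ECNP (X.iff Y)) : ECNP (Y.imp X) := by
  refine ECNP.mp (ECNP.taut ?_) h
  intro v
  simp only [MF.iff, MF.peval]
  cases X.peval v <;> cases Y.peval v <;> rfl

/-- Derived: a conjunction of boxes implies the box of the conjunction. -/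
lemma boxConj : ∀ L : List MF, ECNP ((conjL (L.map .box)).imp (conjL L).box)
  | [] => by
    have htop : ECNP (conjL ([] : List MF)).box :=
      ECNP.nec (ECNP.taut (fun v => by simp [conjL, MF.peval]))
    refine ECNP.mp (ECNP.taut ?_) htop
    intro v
    simp only [MF.peval, List.map_nil]
    cases v (conjL ([] : List MF)).box <;> cases (conjL ([] : List MF)).peval v <;> rfl
  | D :: L => by
    have ih : ECNP ((conjL (L.map .box)).imp (conjL L).box) := boxConj L
    have hc : ECNP ((D.box.and (conjL L).box).imp (D.and (conjL L)).box) := ECNP.axC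
    refine ECNP.mp (ECNP.mp (ECNP.taut ?_) ih) hc
    intro v
    simp only [conjL, List.map_cons, MF.peval]
    cases (conjL (L.map .box)).peval v <;> cases v (conjL L).box <;>
      cases v D.box <;> cases v (D.and (conjL L)).box <;> rfl

end ECNPAux

namespace ECNPAux

variable (A : MF)

/-- Key completeness engine: if every valuation falsifying `φ` determines an
inconsistent state, then `φ` is derivable. -/
lemma key (φ : MF)
    (h : ∀ v : MF → Bool, φ.peval v = false → ECNP ((δ A (st A v)).imp .bot)) :
    ECNP φ := by
  classical
  set L : List (Finset MF) := ((subs A).toFinset.powerset).toList with hL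
  have hall : ∀ s ∈ L, ECNP ((δ A s).imp φ) := by
    intro s hs
    have hsub : s ⊆ (subs A).toFinset := by
      rw [hL, Finset.mem_toList, Finset.mem_powerset] at hs
      exact hs
    by_cases hc : ∃ v, (δ A s).peval v = true ∧ φ.peval v = false
    · obtain ⟨v, hv1, hv2⟩ := hc
      have hse : s = st A v := delta_st A hsub hv1
      have h0 := h v hv2
      rw [← hse] at h0
      exact weaken_bot h0
    · push_neg at hc
      apply ECNP.taut
      intro v
      simp only [MF.peval]
      cases hd : (δ A s).peval v
      · rfl
      · have := hc v hd
        cases hphi : φ.peval v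
        · exact absurd hphi this
        · rfl
  have hdisj : ECNP (disjL (L.map (δ A))) := by
    apply ECNP.taut
    intro v
    rw [peval_disjL, List.any_eq_true]
    refine ⟨δ A (st A v), List.mem_map.2 ⟨st A v, ?_, rfl⟩, st_delta A v⟩
    rw [hL, Finset.mem_toList, Finset.mem_powerset]
    exact st_subset A v
  refine ECNP.mp (or_elimL _ ?_) hdisj
  intro p hp
  rcases List.mem_map.1 hp with ⟨s, hs, rfl⟩
  exact hall s hs

end ECNPAux

namespace ECNPAux

variable (A : MF)

/-- Worlds of the finite canonical model: consistent states. -/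
def Wd := {s : Finset MF // s ∈ (subs A).toFinset.powerset ∧ Con A s}

instance : Finite (Wd A) :=
  Finite.of_injective
    (fun w : Wd A => (⟨w.1, w.2.1⟩ : {s // s ∈ (subs A).toFinset.powerset}))
    (by
      intro a b h
      have h' : a.1 = b.1 :=
        congrArg (Subtype.val : {s // s ∈ (subs A).toFinset.powerset} → Finset MF) h
      exact Subtype.ext h')

/-- Canonical truth set of a formula. -/
def tset (B : MF) : Set (Wd A) := {w | B ∈ w.1}

/-- The finite canonical frame. -/
def Fr : ENFrame (Wd A) where
  N w := {X | ∃ T : Finset MF,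
    (∀ D ∈ T, D.box ∈ subs A ∧ D.box ∈ w.1) ∧ X = ⋂ D ∈ T, tset A D}
  univ_mem w := ⟨∅, by simp, by simp⟩

lemma Fr_isECN : (Fr A).IsECN := by
  rintro x U V ⟨T1, h1, rfl⟩ ⟨T2, h2, rfl⟩
  refine ⟨T1 ∪ T2, ?_, ?_⟩
  · intro D hD
    rcases Finset.mem_union.1 hD with h | h
    · exact h1 D h
    · exact h2 D h
  · rw [← Finset.set_biInter_coe T1, ← Finset.set_biInter_coe T2, ← Set.biInter_union,
      ← Finset.coe_union, Finset.set_biInter_coe]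

lemma Fr_isENP : (Fr A).IsENP := by
  rintro x ⟨T, hT, hE⟩
  -- the conjunction of T is refutable
  have h1 : ECNP ((conjL T.toList).imp .bot) := by
    apply key
    intro v hv
    by_contra hcon
    have hw : st A v ∈ (subs A).toFinset.powerset := Finset.mem_powerset.2 (st_subset A v)
    set w : Wd A := ⟨st A v, hw, hcon⟩ with hwdef
    have hvc : (conjL T.toList).peval v = true := by
      revert hv
      simp only [MF.peval]
      cases (conjL T.toList).peval v <;> simp
    have hwmem : w ∈ ⋂ D ∈ T, tset A D := by
      simp only [Set.mem_iInter₂]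
      intro D hD
      have hDs : D ∈ subs A := mem_subs_of_box (hT D hD).1
      have hDv : D.peval v = true := by
        rw [peval_conjL, List.all_eq_true] at hvc
        exact hvc D (Finset.mem_toList.2 hD)
      show D ∈ w.1
      rw [hwdef]
      exact (mem_st A).2 ⟨hDs, hDv⟩
    rw [← hE] at hwmem
    exact hwmem
  -- hence its box is refutable, contradicting consistency of x
  have h2 : ECNP ((conjL T.toList).iff .bot) := by
    refine iff_intro h1 (ECNP.taut ?_)
    intro v
    simp only [MF.peval]
    cases (conjL T.toList).peval v <;> rfl
  have h3 : ECNP ((conjL T.toList).box.iff MF.bot.box) := ECNP.re h2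
  have h4 : ECNP ((conjL T.toList).box.imp .bot) := by
    have h5 := iff_elim₁ h3
    have hP : ECNP MF.bot.box.neg := ECNP.axP
    refine ECNP.mp (ECNP.mp (ECNP.taut ?_) h5) hP
    intro v
    simp only [MF.peval]
    cases v (conjL T.toList).box <;> cases v MF.bot.box <;> rfl
  -- δ of x implies the conjunction of the boxes
  have h6 : ECNP ((δ A x.1).imp (conjL (T.toList.map .box))) := by
    apply ECNP.taut
    intro v
    simp only [MF.peval]
    cases hd : (δ A x.1).peval v
    · rfl
    · have hΔ := (peval_delta A).1 hd
      have : (conjL (T.toList.map .box)).peval v = true := by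
        rw [peval_conjL, List.all_eq_true]
        intro B hB
        rcases List.mem_map.1 hB with ⟨D, hD, rfl⟩
        have := hT D (Finset.mem_toList.1 hD)
        exact (hΔ D.box this.1).1 this.2
      rw [this]
      rfl
  have h7 : ECNP ((δ A x.1).imp .bot) :=
    imp_trans (imp_trans h6 (boxConj T.toList)) h4
  exact x.2.2 h7

end ECNPAux

namespace ECNPAux

variable (A : MF)

lemma truth_lemma : ∀ B : MF, B ∈ subs A →
    (Fr A).truth (fun n => tset A (.var n)) B = tset A B := by
  intro B
  induction B with
  | var n => intro _; rfl
  | bot =>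
    intro hB
    ext w
    simp only [ENFrame.truth, Set.mem_empty_iff_false, tset, Set.mem_setOf_eq, false_iff]
    intro hmem
    apply w.2.2
    apply incon_of
    intro v hv
    have e := (hv _ hB).1 hmem
    simp [MF.peval] at e
  | neg C ih =>
    intro hB
    have hC : C ∈ subs A := mem_subs_of_neg hB
    show ((Fr A).truth _ C)ᶜ = _
    rw [ih hC]
    ext w
    simp only [Set.mem_compl_iff, tset, Set.mem_setOf_eq]
    constructor
    · intro hnot
      by_contra hn2
      apply w.2.2
      apply incon_of
      intro v hv
      have e1 : ¬ C.peval v = true := fun hh => hnot ((hv C hC).2 hh)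
      have e2 : ¬ (MF.neg C).peval v = true := fun hh => hn2 ((hv _ hB).2 hh)
      simp only [MF.peval] at e2
      cases hc : C.peval v
      · rw [hc] at e2; exact e2 rfl
      · exact e1 hc
    · intro hn hmem
      apply w.2.2
      apply incon_of
      intro v hv
      have e1 := (hv C hC).1 hmem
      have e2 := (hv _ hB).1 hn
      simp [MF.peval, e1] at e2
  | and C D ih1 ih2 =>
    intro hB
    have hC : C ∈ subs A := mem_subs_of_and_left hB
    have hD : D ∈ subs A := mem_subs_of_and_right hB
    show (Fr A).truth _ C ∩ (Fr A).truth _ D = _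
    rw [ih1 hC, ih2 hD]
    ext w
    simp only [Set.mem_inter_iff, tset, Set.mem_setOf_eq]
    constructor
    · rintro ⟨h1, h2⟩
      by_contra h3
      apply w.2.2
      apply incon_of
      intro v hv
      have e1 := (hv C hC).1 h1
      have e2 := (hv D hD).1 h2
      have e3 : ¬ (C.and D).peval v = true := fun hh => h3 ((hv _ hB).2 hh)
      simp [MF.peval, e1, e2] at e3
    · intro h3
      constructor
      · by_contra h1
        apply w.2.2
        apply incon_of
        intro v hv
        have e3 := (hv _ hB).1 h3
        have e1 : ¬ C.peval v = true := fun hh => h1 ((hv C hC).2 hh)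
        simp only [MF.peval, Bool.and_eq_true] at e3
        exact e1 e3.1
      · by_contra h2
        apply w.2.2
        apply incon_of
        intro v hv
        have e3 := (hv _ hB).1 h3
        have e2 : ¬ D.peval v = true := fun hh => h2 ((hv D hD).2 hh)
        simp only [MF.peval, Bool.and_eq_true] at e3
        exact e2 e3.2
  | or C D ih1 ih2 =>
    intro hB
    have hC : C ∈ subs A := mem_subs_of_or_left hB
    have hD : D ∈ subs A := mem_subs_of_or_right hB
    show (Fr A).truth _ C ∪ (Fr A).truth _ D = _
    rw [ih1 hC, ih2 hD]
    ext w
    simp only [Set.mem_union, tset, Set.mem_setOf_eq]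
    constructor
    · rintro (h1 | h1)
      · by_contra h3
        apply w.2.2
        apply incon_of
        intro v hv
        have e1 := (hv C hC).1 h1
        have e3 : ¬ (C.or D).peval v = true := fun hh => h3 ((hv _ hB).2 hh)
        simp [MF.peval, e1] at e3
      · by_contra h3
        apply w.2.2
        apply incon_of
        intro v hv
        have e1 := (hv D hD).1 h1
        have e3 : ¬ (C.or D).peval v = true := fun hh => h3 ((hv _ hB).2 hh)
        simp [MF.peval, e1] at e3
    · intro h3
      by_contra hcon
      push_neg at hcon
      apply w.2.2
      apply incon_of
      intro v hv
      have e3 := (hv _ hB).1 h3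
      have e1 : ¬ C.peval v = true := fun hh => hcon.1 ((hv C hC).2 hh)
      have e2 : ¬ D.peval v = true := fun hh => hcon.2 ((hv D hD).2 hh)
      simp only [MF.peval, Bool.or_eq_true] at e3
      rcases e3 with e | e
      · exact e1 e
      · exact e2 e
  | imp C D ih1 ih2 =>
    intro hB
    have hC : C ∈ subs A := mem_subs_of_imp_left hB
    have hD : D ∈ subs A := mem_subs_of_imp_right hB
    show {x | x ∈ (Fr A).truth _ C → x ∈ (Fr A).truth _ D} = _
    rw [ih1 hC, ih2 hD]
    ext w
    simp only [tset, Set.mem_setOf_eq]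
    constructor
    · intro himp
      by_contra h3
      apply w.2.2
      apply incon_of
      intro v hv
      have e3 : ¬ (C.imp D).peval v = true := fun hh => h3 ((hv _ hB).2 hh)
      simp only [MF.peval, Bool.not_eq_true, Bool.or_eq_false_iff,
        Bool.not_eq_false'] at e3
      have h1 : C ∈ w.1 := (hv C hC).2 e3.1
      have h2 := (hv D hD).1 (himp h1)
      rw [e3.2] at h2
      exact Bool.false_ne_true h2
    · intro h3 h1
      by_contra h2
      apply w.2.2
      apply incon_of
      intro v hv
      have e3 := (hv _ hB).1 h3
      have e1 := (hv C hC).1 h1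
      have e2 : ¬ D.peval v = true := fun hh => h2 ((hv D hD).2 hh)
      simp only [MF.peval, e1, Bool.not_true, Bool.false_or] at e3
      exact e2 e3
  | box C ih =>
    intro hB
    have hC : C ∈ subs A := mem_subs_of_box hB
    show {x | (Fr A).truth _ C ∈ (Fr A).N x} = _
    rw [ih hC]
    ext w
    simp only [Set.mem_setOf_eq, tset]
    constructor
    · rintro ⟨T, hT, hE⟩
      -- Step 1: ECNP (C ↔ conj T)
      set K : MF := conjL T.toList with hK
      have hiff : ECNP (C.iff K) := by
        apply key
        intro v hv
        by_contra hcon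
        have hwp : st A v ∈ (subs A).toFinset.powerset :=
          Finset.mem_powerset.2 (st_subset A v)
        set w' : Wd A := ⟨st A v, hwp, hcon⟩ with hw'
        have hne : C.peval v ≠ K.peval v := by
          intro he
          cases hk : K.peval v <;> cases hc : C.peval v <;>
            simp [MF.iff, MF.peval, hk, hc] at hv he
        have hset : C ∈ w'.1 ↔ ∀ D ∈ T, D ∈ w'.1 := by
          have h1 := Set.ext_iff.mp hE w'
          simpa only [tset, Set.mem_setOf_eq, Set.mem_iInter₂] using h1
        have hKval : K.peval v = true ↔ ∀ D ∈ T, D.peval v = true := by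
          rw [hK, peval_conjL, List.all_eq_true]
          constructor
          · intro hh D hD; exact hh D (Finset.mem_toList.2 hD)
          · intro hh D hD; exact hh D (Finset.mem_toList.1 hD)
        apply hne
        cases hk : K.peval v
        · cases hc : C.peval v
          · rfl
          · exfalso
            have hCw : C ∈ w'.1 := (mem_st A).2 ⟨hC, hc⟩
            have := hset.1 hCw
            have hall : ∀ D ∈ T, D.peval v = true := by
              intro D hD
              exact ((mem_st A).1 (this D hD)).2
            rw [hKval.2 hall] at hk
            exact Bool.noConfusion hk
        · have hall : ∀ D ∈ T, D ∈ w'.1 := by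
            intro D hD
            exact (mem_st A).2 ⟨mem_subs_of_box (hT D hD).1, hKval.1 hk D hD⟩
          exact ((mem_st A).1 (hset.2 hall)).2
      -- Step 2: conclude □C ∈ w.1
      have hre := ECNP.re hiff
      by_contra hnot
      apply w.2.2
      have t1 : ECNP ((δ A w.1).imp (conjL (T.toList.map .box))) := by
        apply ECNP.taut
        intro v
        simp only [MF.peval]
        cases hd : (δ A w.1).peval v
        · rfl
        · have hΔ := (peval_delta A).1 hd
          have : (conjL (T.toList.map .box)).peval v = true := by
            rw [peval_conjL, List.all_eq_true]
            intro x hx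
            rcases List.mem_map.1 hx with ⟨D, hD, rfl⟩
            have hT' := hT D (Finset.mem_toList.1 hD)
            exact (hΔ D.box hT'.1).1 hT'.2
          rw [this]
          rfl
      have c1 : ECNP ((δ A w.1).imp C.box) :=
        imp_trans (imp_trans t1 (boxConj T.toList)) (iff_elim₂ hre)
      have t4 : ECNP ((δ A w.1).imp C.box.neg) := by
        apply ECNP.taut
        intro v
        simp only [MF.peval]
        cases hd : (δ A w.1).peval v
        · rfl
        · have hΔ := (peval_delta A).1 hd
          have : ¬ (MF.box C).peval v = true := fun hh => hnot ((hΔ _ hB).2 hh)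
          simp only [MF.peval, Bool.not_eq_true] at this
          rw [this]
          rfl
      refine ECNP.mp (ECNP.mp (ECNP.taut ?_) c1) t4
      intro v
      simp only [MF.peval]
      cases (δ A w.1).peval v <;> cases v C.box <;> rfl
    · intro hw
      refine ⟨{C}, ?_, ?_⟩
      · intro D hD
        rw [Finset.mem_singleton] at hD
        subst hD
        exact ⟨hB, hw⟩
      · exact (Finset.set_biInter_singleton C (tset A)).symm

end ECNPAux

/-- Completeness of ECNP with respect to finite ECNP-frames. -/
theorem ECNP_completeness (A : MF)
    (h : ∀ (W : Type) [Nonempty W] [Finite W] (F : ENFrame W),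
      F.IsECN → F.IsENP → F.Valid A) :
    ECNP A := by
  classical
  apply ECNPAux.key A A
  intro v hv
  by_contra hcon
  have hwp : ECNPAux.st A v ∈ (ECNPAux.subs A).toFinset.powerset :=
    Finset.mem_powerset.2 (ECNPAux.st_subset A v)
  let w0 : ECNPAux.Wd A := ⟨ECNPAux.st A v, hwp, hcon⟩
  haveI : Nonempty (ECNPAux.Wd A) := ⟨w0⟩
  have hval := h (ECNPAux.Wd A) (ECNPAux.Fr A) (ECNPAux.Fr_isECN A) (ECNPAux.Fr_isENP A)
  have h2 := hval (fun n => ECNPAux.tset A (.var n))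
  rw [ECNPAux.truth_lemma A A (ECNPAux.self_mem_subs A)] at h2
  have hmem : w0 ∈ ECNPAux.tset A A := h2 ▸ Set.mem_univ w0
  have hA : A ∈ ECNPAux.st A v := hmem
  have hpe := ((ECNPAux.mem_st A).1 hA).2
  rw [hv] at hpe
  exact Bool.noConfusion hpe
end

section
/- Decidability of ENP: the set of modal formulas derivable in the logic ENP is decidable, i.e., the predicate 'A is derivable in ENP' on modal formulas is a decidable predicate. -/
/-- An injective Gödel numbering of modal formulas, via the pairing function. -/
def encodeMF : MF → ℕ
  | .var n => Nat.pair 0 n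
  | .bot => Nat.pair 1 0
  | .neg A => Nat.pair 2 (encodeMF A)
  | .and A B => Nat.pair 3 (Nat.pair (encodeMF A) (encodeMF B))
  | .or A B => Nat.pair 4 (Nat.pair (encodeMF A) (encodeMF B))
  | .imp A B => Nat.pair 5 (Nat.pair (encodeMF A) (encodeMF B))
  | .box A => Nat.pair 6 (encodeMF A)

/-! ### numeric lemmas -/

lemma pair_right_lt {t x : ℕ} (h : 1 ≤ t) : x < Nat.pair t x := by
  unfold Nat.pair
  split
  · nlinarith
  · omega

lemma sq_le_pair (a b : ℕ) : (max a b) * (max a b) ≤ Nat.pair a b := by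
  unfold Nat.pair
  split
  · have : max a b = b := by omega
    nlinarith
  · have : max a b = a := by omega
    nlinarith

lemma pair_lt_sq {x y M : ℕ} (hx : x < M) (hy : y < M) : Nat.pair x y < M * M := by
  unfold Nat.pair
  split
  · nlinarith
  · nlinarith

lemma pair_lt_pair {a b x y : ℕ} (hx : x < max a b) (hy : y < max a b) :
    Nat.pair x y < Nat.pair a b :=
  lt_of_lt_of_le (pair_lt_sq hx hy) (sq_le_pair a b)

/-! ### decoding -/

def decodeMF (n : ℕ) : MF :=
  match h : n.unpair with
  | (0, x) => .var x
  | (1, _) => .bot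
  | (2, x) => .neg (decodeMF x)
  | (3, x) => .and (decodeMF x.unpair.1) (decodeMF x.unpair.2)
  | (4, x) => .or (decodeMF x.unpair.1) (decodeMF x.unpair.2)
  | (5, x) => .imp (decodeMF x.unpair.1) (decodeMF x.unpair.2)
  | (6, x) => .box (decodeMF x)
  | _ => .bot
termination_by n
decreasing_by
  all_goals
    have hn : n = Nat.pair _ _ := (Nat.pair_eq_of_unpair_eq h).symm
    first
    | (calc _ ≤ x := Nat.unpair_left_le x
        _ < n := by rw [hn]; exact pair_right_lt (by omega))
    | (calc _ ≤ x := Nat.unpair_right_le x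
        _ < n := by rw [hn]; exact pair_right_lt (by omega))
    | (rw [hn]; exact pair_right_lt (by omega))

lemma decode_encode (A : MF) : decodeMF (encodeMF A) = A := by
  induction A <;> rw [encodeMF, decodeMF] <;> split <;> simp_all [Nat.unpair_pair] <;>
    (rename_i hq; subst hq; simp [Nat.unpair_pair, *])

lemma encodeMF_inj {A B : MF} (h : encodeMF A = encodeMF B) : A = B := by
  have := decode_encode A; rw [h, decode_encode] at this; exact this.symm

/-! ### ENP toolkit -/

/-- ⊤ -/
def eTop : MF := MF.bot.neg

lemma ENP.of_cut : ∀ (l : List MF), (∀ C ∈ l, ENP C) →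
    ∀ (X : MF), (∀ v, (∀ C ∈ l, C.peval v = true) → X.peval v = true) → ENP X := by
  intro l
  induction l with
  | nil => intro _ X h; exact ENP.taut fun v => h v (by simp)
  | cons C t ih =>
    intro hl X h
    have h1 : ENP (C.imp X) := by
      apply ih (fun D hD => hl D (List.mem_cons_of_mem _ hD))
      intro v hv
      show (!(C.peval v) || X.peval v) = true
      by_cases hc : C.peval v = true
      · rw [h v (by intro D hD; rcases List.mem_cons.1 hD with rfl | hD
                    exacts [hc, hv D hD])]
        simp
      · simp [Bool.not_eq_true] at hc; rw [hc]; simp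
    exact h1.mp (hl C (List.mem_cons_self))

lemma taut2 {X Y : MF} (hx : ENP X) (t : (X.imp Y).Tautology) : ENP Y :=
  (ENP.taut t).mp hx

lemma taut3 {X Y Z : MF} (hx : ENP X) (hy : ENP Y)
    (t : (X.imp (Y.imp Z)).Tautology) : ENP Z :=
  ((ENP.taut t).mp hx).mp hy

lemma ENP.iff_refl (A : MF) : ENP (A.iff A) := by
  apply ENP.taut; intro v
  simp [MF.iff, MF.peval]

lemma ENP.iff_symm {A B : MF} (h : ENP (A.iff B)) : ENP (B.iff A) := by
  refine taut2 h fun v => ?_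
  simp only [MF.iff, MF.peval]
  cases A.peval v <;> cases B.peval v <;> rfl

lemma ENP.iff_trans {A B C : MF} (h1 : ENP (A.iff B)) (h2 : ENP (B.iff C)) :
    ENP (A.iff C) := by
  refine taut3 h1 h2 fun v => ?_
  simp only [MF.iff, MF.peval]
  cases A.peval v <;> cases B.peval v <;> cases C.peval v <;> rfl

lemma ENP.of_iff {A B : MF} (h : ENP (A.iff B)) (ha : ENP A) : ENP B := by
  refine taut3 h ha fun v => ?_
  simp only [MF.iff, MF.peval]
  cases A.peval v <;> cases B.peval v <;> rfl

lemma ENP.iff_top {A : MF} : ENP A ↔ ENP (A.iff eTop) := by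
  constructor
  · intro h
    refine taut2 h fun v => ?_
    simp only [MF.iff, MF.peval, eTop]
    cases A.peval v <;> rfl
  · intro h
    refine taut2 h fun v => ?_
    simp only [MF.iff, MF.peval, eTop]
    cases A.peval v <;> rfl

lemma ENP.box_of_iff_top {C : MF} (h : ENP (C.iff eTop)) : ENP C.box :=
  (ENP.iff_top.2 h).nec

lemma ENP.negbox_of_iff_bot {C : MF} (h : ENP (C.iff MF.bot)) : ENP C.box.neg := by
  have h2 : ENP (C.box.iff MF.bot.box) := h.re
  refine taut3 h2 ENP.axP fun v => ?_
  simp only [MF.iff, MF.peval]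
  cases v C.box <;> cases v MF.bot.box <;> rfl

/-! ### soundness -/

def Adm (v : MF → Bool) : Prop :=
  v MF.bot.box = false ∧ (∀ B : MF, ENP B → v B.box = true) ∧
    (∀ B C : MF, ENP (B.iff C) → v B.box = v C.box)

lemma ENP.sound {X : MF} (h : ENP X) : ∀ v, Adm v → X.peval v = true := by
  induction h with
  | taut t => exact fun v _ => t v
  | axP => intro v hv; obtain ⟨h1,h2,h3⟩ := hv; simp [MF.peval, h1]
  | mp h1 h2 ih1 ih2 =>
    intro v hv
    have e1 := ih1 v hv; have e2 := ih2 v hv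
    simp only [MF.peval] at e1
    rw [e2] at e1; simpa using e1
  | nec h ih => intro v hv; obtain ⟨h1,h2,h3⟩ := hv; exact h2 _ h
  | re h ih =>
    intro v hv
    obtain ⟨h1,h2,h3⟩ := hv
    have := h3 _ _ h
    simp only [MF.iff, MF.peval, this]
    cases v _ <;> rfl

/-! ### consistency -/

def ev : MF → Bool
  | .var _ => true
  | .bot => false
  | .neg A => !(ev A)
  | .and A B => ev A && ev B
  | .or A B => ev A || ev B
  | .imp A B => !(ev A) || ev B
  | .box A => ev A

lemma ev_peval (A : MF) : A.peval ev = ev A := by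
  induction A <;> simp [MF.peval, ev, *]

lemma ev_sound {X : MF} (h : ENP X) : ev X = true := by
  induction h with
  | taut t => rw [← ev_peval]; exact t ev
  | axP => rfl
  | mp h1 h2 ih1 ih2 => simp only [ev] at ih1; rw [ih2] at ih1; simpa using ih1
  | nec h ih => exact ih
  | re h ih =>
    rename_i A B
    simp only [MF.iff, ev] at ih ⊢
    cases hA : ev A <;> cases hB : ev B <;> simp_all

lemma not_ENP_bot : ¬ ENP MF.bot := fun h => by simpa [ev] using ev_sound h

/-! ### atoms at the MF level -/

deriving instance DecidableEq for MF

def matoms : MF → List MF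
  | .var n => [.var n]
  | .bot => []
  | .neg A => matoms A
  | .and A B => matoms A ++ matoms B
  | .or A B => matoms A ++ matoms B
  | .imp A B => matoms A ++ matoms B
  | .box A => [A.box]

lemma matoms_shape {A P : MF} (h : P ∈ matoms A) :
    (∃ m : ℕ, P = .var m) ∨ (∃ C : MF, P = C.box) := by
  induction A with
  | var m => simp [matoms] at h; exact Or.inl ⟨m, h⟩
  | bot => simp [matoms] at h
  | neg A ih => exact ih h
  | and A B ihA ihB => rcases List.mem_append.1 h with h | h; exacts [ihA h, ihB h]
  | or A B ihA ihB => rcases List.mem_append.1 h with h | h; exacts [ihA h, ihB h]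
  | imp A B ihA ihB => rcases List.mem_append.1 h with h | h; exacts [ihA h, ihB h]
  | box C ih => simp [matoms] at h; exact Or.inr ⟨C, h⟩

lemma matoms_le {A P : MF} (h : P ∈ matoms A) : encodeMF P ≤ encodeMF A := by
  induction A with
  | var m => simp [matoms] at h; subst h; rfl
  | bot => simp [matoms] at h
  | neg A ih =>
    exact le_trans (ih h) (le_trans (Nat.right_le_pair 2 _) (le_of_eq rfl))
  | and A B ihA ihB =>
    rcases List.mem_append.1 h with h | h
    · exact le_trans (ihA h) (le_trans (Nat.left_le_pair _ _) (Nat.right_le_pair 3 _))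
    · exact le_trans (ihB h) (le_trans (Nat.right_le_pair _ _) (Nat.right_le_pair 3 _))
  | or A B ihA ihB =>
    rcases List.mem_append.1 h with h | h
    · exact le_trans (ihA h) (le_trans (Nat.left_le_pair _ _) (Nat.right_le_pair 4 _))
    · exact le_trans (ihB h) (le_trans (Nat.right_le_pair _ _) (Nat.right_le_pair 4 _))
  | imp A B ihA ihB =>
    rcases List.mem_append.1 h with h | h
    · exact le_trans (ihA h) (le_trans (Nat.left_le_pair _ _) (Nat.right_le_pair 5 _))
    · exact le_trans (ihB h) (le_trans (Nat.right_le_pair _ _) (Nat.right_le_pair 5 _))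
  | box C ih => simp [matoms] at h; subst h; rfl

lemma peval_congr_s14 {v w : MF → Bool} :
    ∀ {A : MF}, (∀ P ∈ matoms A, v P = w P) → A.peval v = A.peval w := by
  intro A
  induction A with
  | var m => intro h; simpa [MF.peval] using h _ (by simp [matoms])
  | bot => intro _; rfl
  | neg A ih => intro h; simp [MF.peval, ih h]
  | and A B ihA ihB =>
    intro h
    simp [MF.peval, ihA fun P hP => h P (List.mem_append_left _ hP),
      ihB fun P hP => h P (List.mem_append_right _ hP)]
  | or A B ihA ihB =>
    intro h
    simp [MF.peval, ihA fun P hP => h P (List.mem_append_left _ hP),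
      ihB fun P hP => h P (List.mem_append_right _ hP)]
  | imp A B ihA ihB =>
    intro h
    simp [MF.peval, ihA fun P hP => h P (List.mem_append_left _ hP),
      ihB fun P hP => h P (List.mem_append_right _ hP)]
  | box C ih => intro h; simpa [MF.peval] using h _ (by simp [matoms])

/-! ### list helpers -/

lemma indexOf_map_encode (l : List MF) (P : MF) :
    (l.map encodeMF).idxOf (encodeMF P) = l.idxOf P := by
  induction l with
  | nil => rfl
  | cons Q t ih =>
    by_cases h : Q = P
    · subst h; simp [List.idxOf_cons_self]
    · rw [List.map_cons, List.idxOf_cons_ne _ (fun he => h (encodeMF_inj he)),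
        List.idxOf_cons_ne _ h, ih]

def allBools : ℕ → List (List Bool)
  | 0 => [[]]
  | n + 1 => (allBools n).flatMap fun s => [false :: s, true :: s]

lemma mem_allBools {n : ℕ} {s : List Bool} : s ∈ allBools n ↔ s.length = n := by
  induction n generalizing s with
  | zero => simp [allBools, List.length_eq_zero_iff]
  | succ n ih =>
    simp only [allBools, List.mem_flatMap]
    constructor
    · rintro ⟨t, ht, hs⟩
      have := ih.1 ht
      rcases List.mem_pair.1 hs with rfl | rfl <;> simp [this]
    · intro h
      cases s with
      | nil => simp at h
      | cons a t =>
        refine ⟨t, ih.2 (by simpa using h), ?_⟩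
        cases a <;> simp

/-- evaluate getD on a mapped list -/
lemma getD_map_eval {l : List MF} {v : MF → Bool} {P : MF} (h : P ∈ l) :
    (l.map v).getD (l.idxOf P) false = v P := by
  have hlt : l.idxOf P < l.length := List.idxOf_lt_length_iff.2 h
  rw [List.getD_eq_getElem?_getD, List.getElem?_map,
    List.getElem?_eq_getElem hlt]
  simp [List.getElem_idxOf hlt]

/-! ### ℕ-level recursive functions -/

def F_valid (n : ℕ) (prev : ℕ → Bool) : Bool :=
  if n.unpair.1 = 0 then true
  else if n.unpair.1 = 1 then n.unpair.2 == 0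
  else if n.unpair.1 = 2 then prev n.unpair.2
  else if n.unpair.1 = 6 then prev n.unpair.2
  else if n.unpair.1 ≤ 5 then prev n.unpair.2.unpair.1 && prev n.unpair.2.unpair.2
  else false

def validN (n : ℕ) : Bool :=
  F_valid n (fun m => if h : m < n then validN m else false)
termination_by n
decreasing_by exact h

lemma validN_eq (n : ℕ) :
    validN n = F_valid n (fun m => if m < n then validN m else false) := by
  rw [validN]; simp only [dite_eq_ite]

def F_atoms (n : ℕ) (prev : ℕ → List ℕ) : List ℕ :=
  if n.unpair.1 = 0 then [n]
  else if n.unpair.1 = 1 then []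
  else if n.unpair.1 = 2 then prev n.unpair.2
  else if n.unpair.1 = 6 then [n]
  else if n.unpair.1 ≤ 5 then prev n.unpair.2.unpair.1 ++ prev n.unpair.2.unpair.2
  else []

def atomsN (n : ℕ) : List ℕ :=
  F_atoms n (fun m => if h : m < n then atomsN m else [])
termination_by n
decreasing_by exact h

lemma atomsN_eq (n : ℕ) :
    atomsN n = F_atoms n (fun m => if m < n then atomsN m else []) := by
  rw [atomsN]; simp only [dite_eq_ite]

def F_pev (s : List Bool × List ℕ) (n : ℕ) (prev : ℕ → Bool) : Bool :=
  if n.unpair.1 = 0 then s.1.getD (s.2.idxOf n) false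
  else if n.unpair.1 = 1 then false
  else if n.unpair.1 = 2 then !(prev n.unpair.2)
  else if n.unpair.1 = 3 then prev n.unpair.2.unpair.1 && prev n.unpair.2.unpair.2
  else if n.unpair.1 = 4 then prev n.unpair.2.unpair.1 || prev n.unpair.2.unpair.2
  else if n.unpair.1 = 5 then !(prev n.unpair.2.unpair.1) || prev n.unpair.2.unpair.2
  else if n.unpair.1 = 6 then s.1.getD (s.2.idxOf n) false
  else false

def pevN (s : List Bool × List ℕ) (n : ℕ) : Bool :=
  F_pev s n (fun m => if h : m < n then pevN s m else false)
termination_by n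
decreasing_by exact h

lemma pevN_eq (s : List Bool × List ℕ) (n : ℕ) :
    pevN s n = F_pev s n (fun m => if m < n then pevN s m else false) := by
  rw [pevN]; simp only [dite_eq_ite]

def conB (L : List ℕ) (prev : ℕ → Bool) (s : List Bool) : Bool :=
  L.all fun p =>
    !(p.unpair.1 == 6) ||
      ((!(prev (Nat.pair p.unpair.2 2)) || !(s.getD (L.idxOf p) false)) &&
       ((!(prev (Nat.pair p.unpair.2 8)) || s.getD (L.idxOf p) false) &&
        (L.all fun q =>
          !(q.unpair.1 == 6) ||
            (!(prev (Nat.pair p.unpair.2 q.unpair.2)) ||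
              (s.getD (L.idxOf p) false == s.getD (L.idxOf q) false)))))

def F_G (n : ℕ) (prev : ℕ → Bool) : Bool :=
  (allBools (atomsN n.unpair.1 ++ atomsN n.unpair.2).length).all fun s =>
    !(conB (atomsN n.unpair.1 ++ atomsN n.unpair.2) prev s) ||
      (pevN (s, atomsN n.unpair.1 ++ atomsN n.unpair.2) n.unpair.1 ==
        pevN (s, atomsN n.unpair.1 ++ atomsN n.unpair.2) n.unpair.2)

def fGN (n : ℕ) : Bool :=
  F_G n (fun m => if h : m < n then fGN m else false)
termination_by n
decreasing_by exact h

lemma fGN_eq (n : ℕ) :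
    fGN n = F_G n (fun m => if m < n then fGN m else false) := by
  rw [fGN]; simp only [dite_eq_ite]

/-! ### spec lemmas for the ℕ-level functions -/

lemma validN_encode (A : MF) : validN (encodeMF A) = true := by
  induction A with
  | var m => rw [validN_eq]; simp [F_valid, encodeMF, Nat.unpair_pair]
  | bot => rw [validN_eq]; simp [F_valid, encodeMF, Nat.unpair_pair]
  | neg A ih =>
    rw [validN_eq]
    have hx : encodeMF A < Nat.pair 2 (encodeMF A) := pair_right_lt (by norm_num)
    simp [F_valid, encodeMF, Nat.unpair_pair, hx, ih]
  | and A B ihA ihB =>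
    rw [validN_eq]
    have hx : Nat.pair (encodeMF A) (encodeMF B) <
        Nat.pair 3 (Nat.pair (encodeMF A) (encodeMF B)) := pair_right_lt (by norm_num)
    have h1 : encodeMF A < Nat.pair 3 (Nat.pair (encodeMF A) (encodeMF B)) :=
      lt_of_le_of_lt (Nat.left_le_pair _ _) hx
    have h2 : encodeMF B < Nat.pair 3 (Nat.pair (encodeMF A) (encodeMF B)) :=
      lt_of_le_of_lt (Nat.right_le_pair _ _) hx
    simp [F_valid, encodeMF, Nat.unpair_pair, h1, h2, ihA, ihB]
  | or A B ihA ihB =>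
    rw [validN_eq]
    have hx : Nat.pair (encodeMF A) (encodeMF B) <
        Nat.pair 4 (Nat.pair (encodeMF A) (encodeMF B)) := pair_right_lt (by norm_num)
    have h1 : encodeMF A < Nat.pair 4 (Nat.pair (encodeMF A) (encodeMF B)) :=
      lt_of_le_of_lt (Nat.left_le_pair _ _) hx
    have h2 : encodeMF B < Nat.pair 4 (Nat.pair (encodeMF A) (encodeMF B)) :=
      lt_of_le_of_lt (Nat.right_le_pair _ _) hx
    simp [F_valid, encodeMF, Nat.unpair_pair, h1, h2, ihA, ihB]
  | imp A B ihA ihB =>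
    rw [validN_eq]
    have hx : Nat.pair (encodeMF A) (encodeMF B) <
        Nat.pair 5 (Nat.pair (encodeMF A) (encodeMF B)) := pair_right_lt (by norm_num)
    have h1 : encodeMF A < Nat.pair 5 (Nat.pair (encodeMF A) (encodeMF B)) :=
      lt_of_le_of_lt (Nat.left_le_pair _ _) hx
    have h2 : encodeMF B < Nat.pair 5 (Nat.pair (encodeMF A) (encodeMF B)) :=
      lt_of_le_of_lt (Nat.right_le_pair _ _) hx
    simp [F_valid, encodeMF, Nat.unpair_pair, h1, h2, ihA, ihB]
  | box A ih =>
    rw [validN_eq]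
    have hx : encodeMF A < Nat.pair 6 (encodeMF A) := pair_right_lt (by norm_num)
    simp [F_valid, encodeMF, Nat.unpair_pair, hx, ih]

lemma validN_decode : ∀ n, validN n = true → encodeMF (decodeMF n) = n := by
  intro n
  induction n using Nat.strong_induction_on with
  | _ n ih =>
    intro h
    rw [validN_eq] at h
    rw [decodeMF]
    split <;> rename_i heq
    · rw [encodeMF]; exact Nat.pair_eq_of_unpair_eq heq
    · rw [encodeMF]
      simp only [F_valid, heq] at h
      simp at h
      rw [← h]; exact Nat.pair_eq_of_unpair_eq heq
    · simp only [F_valid, heq] at h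
      simp at h
      rcases h with ⟨hlt, hv⟩
      rw [encodeMF, ih _ hlt hv]; exact Nat.pair_eq_of_unpair_eq heq
    · simp only [F_valid, heq] at h
      simp at h
      rcases h with ⟨⟨hlt1, hv1⟩, hlt2, hv2⟩
      rw [encodeMF, ih _ hlt1 hv1, ih _ hlt2 hv2]
      rw [Nat.pair_unpair]; exact Nat.pair_eq_of_unpair_eq heq
    · simp only [F_valid, heq] at h
      simp at h
      rcases h with ⟨⟨hlt1, hv1⟩, hlt2, hv2⟩
      rw [encodeMF, ih _ hlt1 hv1, ih _ hlt2 hv2]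
      rw [Nat.pair_unpair]; exact Nat.pair_eq_of_unpair_eq heq
    · simp only [F_valid, heq] at h
      simp at h
      rcases h with ⟨⟨hlt1, hv1⟩, hlt2, hv2⟩
      rw [encodeMF, ih _ hlt1 hv1, ih _ hlt2 hv2]
      rw [Nat.pair_unpair]; exact Nat.pair_eq_of_unpair_eq heq
    · simp only [F_valid, heq] at h
      simp at h
      rcases h with ⟨hlt, hv⟩
      rw [encodeMF, ih _ hlt hv]; exact Nat.pair_eq_of_unpair_eq heq
    · exfalso
      rename_i h2 h3 h4 h5 h6 h7
      have ht : 7 ≤ n.unpair.1 := by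
        rcases hu : n.unpair with ⟨t, x⟩
        by_contra hc
        interval_cases t
        exacts [h2 x hu, h3 x hu, h4 x hu, h5 x hu, h6 x hu, h7 x hu, heq x hu]
      simp only [F_valid] at h
      rw [if_neg (by omega), if_neg (by omega), if_neg (by omega), if_neg (by omega),
        if_neg (by omega)] at h
      exact Bool.false_ne_true h

lemma atomsN_encode (A : MF) : atomsN (encodeMF A) = (matoms A).map encodeMF := by
  induction A with
  | var m => rw [atomsN_eq]; simp [F_atoms, encodeMF, matoms, Nat.unpair_pair]
  | bot => rw [atomsN_eq]; simp [F_atoms, encodeMF, matoms, Nat.unpair_pair]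
  | neg A ih =>
    rw [atomsN_eq]
    have hx : encodeMF A < Nat.pair 2 (encodeMF A) := pair_right_lt (by norm_num)
    simp [F_atoms, encodeMF, matoms, Nat.unpair_pair, hx, ih]
  | and A B ihA ihB =>
    rw [atomsN_eq]
    have hx : Nat.pair (encodeMF A) (encodeMF B) <
        Nat.pair 3 (Nat.pair (encodeMF A) (encodeMF B)) := pair_right_lt (by norm_num)
    have h1 := lt_of_le_of_lt (Nat.left_le_pair (encodeMF A) (encodeMF B)) hx
    have h2 := lt_of_le_of_lt (Nat.right_le_pair (encodeMF A) (encodeMF B)) hx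
    simp [F_atoms, encodeMF, matoms, Nat.unpair_pair, h1, h2, ihA, ihB]
  | or A B ihA ihB =>
    rw [atomsN_eq]
    have hx : Nat.pair (encodeMF A) (encodeMF B) <
        Nat.pair 4 (Nat.pair (encodeMF A) (encodeMF B)) := pair_right_lt (by norm_num)
    have h1 := lt_of_le_of_lt (Nat.left_le_pair (encodeMF A) (encodeMF B)) hx
    have h2 := lt_of_le_of_lt (Nat.right_le_pair (encodeMF A) (encodeMF B)) hx
    simp [F_atoms, encodeMF, matoms, Nat.unpair_pair, h1, h2, ihA, ihB]
  | imp A B ihA ihB =>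
    rw [atomsN_eq]
    have hx : Nat.pair (encodeMF A) (encodeMF B) <
        Nat.pair 5 (Nat.pair (encodeMF A) (encodeMF B)) := pair_right_lt (by norm_num)
    have h1 := lt_of_le_of_lt (Nat.left_le_pair (encodeMF A) (encodeMF B)) hx
    have h2 := lt_of_le_of_lt (Nat.right_le_pair (encodeMF A) (encodeMF B)) hx
    simp [F_atoms, encodeMF, matoms, Nat.unpair_pair, h1, h2, ihA, ihB]
  | box A ih => rw [atomsN_eq]; simp [F_atoms, encodeMF, matoms, Nat.unpair_pair]

lemma pevN_encode (s : List Bool) (L : List ℕ) (A : MF) :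
    pevN (s, L) (encodeMF A) =
      A.peval (fun X => s.getD (L.idxOf (encodeMF X)) false) := by
  induction A with
  | var m => rw [pevN_eq]; simp [F_pev, encodeMF, MF.peval, Nat.unpair_pair]
  | bot => rw [pevN_eq]; simp [F_pev, encodeMF, MF.peval, Nat.unpair_pair]
  | neg A ih =>
    rw [pevN_eq]
    have hx : encodeMF A < Nat.pair 2 (encodeMF A) := pair_right_lt (by norm_num)
    simp [F_pev, encodeMF, MF.peval, Nat.unpair_pair, hx, ih]
  | and A B ihA ihB =>
    rw [pevN_eq]
    have hx : Nat.pair (encodeMF A) (encodeMF B) <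
        Nat.pair 3 (Nat.pair (encodeMF A) (encodeMF B)) := pair_right_lt (by norm_num)
    have h1 := lt_of_le_of_lt (Nat.left_le_pair (encodeMF A) (encodeMF B)) hx
    have h2 := lt_of_le_of_lt (Nat.right_le_pair (encodeMF A) (encodeMF B)) hx
    simp [F_pev, encodeMF, MF.peval, Nat.unpair_pair, h1, h2, ihA, ihB]
  | or A B ihA ihB =>
    rw [pevN_eq]
    have hx : Nat.pair (encodeMF A) (encodeMF B) <
        Nat.pair 4 (Nat.pair (encodeMF A) (encodeMF B)) := pair_right_lt (by norm_num)
    have h1 := lt_of_le_of_lt (Nat.left_le_pair (encodeMF A) (encodeMF B)) hx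
    have h2 := lt_of_le_of_lt (Nat.right_le_pair (encodeMF A) (encodeMF B)) hx
    simp [F_pev, encodeMF, MF.peval, Nat.unpair_pair, h1, h2, ihA, ihB]
  | imp A B ihA ihB =>
    rw [pevN_eq]
    have hx : Nat.pair (encodeMF A) (encodeMF B) <
        Nat.pair 5 (Nat.pair (encodeMF A) (encodeMF B)) := pair_right_lt (by norm_num)
    have h1 := lt_of_le_of_lt (Nat.left_le_pair (encodeMF A) (encodeMF B)) hx
    have h2 := lt_of_le_of_lt (Nat.right_le_pair (encodeMF A) (encodeMF B)) hx
    simp [F_pev, encodeMF, MF.peval, Nat.unpair_pair, h1, h2, ihA, ihB]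
  | box A ih => rw [pevN_eq]; simp [F_pev, encodeMF, MF.peval, Nat.unpair_pair]

/-! ### the constraint predicate at the MF level -/

def vkf (mats : List MF) (s : List Bool) : MF → Bool :=
  fun X => s.getD ((mats.map encodeMF).idxOf (encodeMF X)) false

def ConS (mats : List MF) (s : List Bool) : Prop :=
  ∀ C : MF, C.box ∈ mats →
    ((ENP (C.iff MF.bot) → vkf mats s C.box = false) ∧
     (ENP (C.iff eTop) → vkf mats s C.box = true) ∧
     (∀ C' : MF, C'.box ∈ mats → ENP (C.iff C') →
        vkf mats s C.box = vkf mats s C'.box))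

lemma mats_shape {A B P : MF} (h : P ∈ matoms A ++ matoms B) :
    (∃ m : ℕ, P = .var m) ∨ (∃ C : MF, P = C.box) := by
  rcases List.mem_append.1 h with h | h
  exacts [matoms_shape h, matoms_shape h]

/-- From `ENP (A.iff B)`, every constrained valuation makes A and B equal. -/
lemma soundness_step {A B : MF} (hE : ENP (A.iff B)) (s : List Bool)
    (hCs : ConS (matoms A ++ matoms B) s) :
    A.peval (vkf (matoms A ++ matoms B) s) = B.peval (vkf (matoms A ++ matoms B) s) := by
  classical
  set mats := matoms A ++ matoms B with hmats
  set vk : MF → Bool := vkf mats s with hvk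
  let v : MF → Bool := fun X =>
    match X with
    | .box C =>
        if ∃ C' : MF, C'.box ∈ mats ∧ ENP (C.iff C') ∧ vk C'.box = true then true
        else if ∃ C' : MF, C'.box ∈ mats ∧ ENP (C.iff C') then false
        else if ENP C then true else false
    | X => vk X
  have hv_box : ∀ C : MF, v C.box =
      (if ∃ C' : MF, C'.box ∈ mats ∧ ENP (C.iff C') ∧ vk C'.box = true then true
       else if ∃ C' : MF, C'.box ∈ mats ∧ ENP (C.iff C') then false
       else if ENP C then true else false) := fun C => rfl
  have hv_var : ∀ m : ℕ, v (.var m) = vk (.var m) := fun m => rfl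
  -- agreement on atoms
  have hagree : ∀ P ∈ mats, v P = vk P := by
    intro P hP
    rcases mats_shape hP with ⟨m, rfl⟩ | ⟨C, rfl⟩
    · exact hv_var m
    · rw [hv_box]
      by_cases hcase : vk C.box = true
      · rw [if_pos ⟨C, hP, ENP.iff_refl C, hcase⟩, hcase]
      · have h1 : ¬ ∃ C' : MF, C'.box ∈ mats ∧ ENP (C.iff C') ∧ vk C'.box = true := by
          rintro ⟨C', hC', hEq, hT⟩
          exact hcase (((hCs C hP).2.2 C' hC' hEq).trans hT)
        rw [if_neg h1, if_pos ⟨C, hP, ENP.iff_refl C⟩]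
        simp only [Bool.not_eq_true] at hcase
        exact hcase.symm
  -- admissibility
  have hAdm : Adm v := by
    refine ⟨?_, ?_, ?_⟩
    · rw [hv_box]
      have h1 : ¬ ∃ C' : MF, C'.box ∈ mats ∧ ENP (MF.bot.iff C') ∧ vk C'.box = true := by
        rintro ⟨C', hC', hEq, hT⟩
        have hz : vk C'.box = false := (hCs C' hC').1 (ENP.iff_symm hEq)
        rw [hz] at hT
        exact Bool.false_ne_true hT
      rw [if_neg h1]
      by_cases h2 : ∃ C' : MF, C'.box ∈ mats ∧ ENP (MF.bot.iff C')
      · rw [if_pos h2]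
      · rw [if_neg h2, if_neg not_ENP_bot]
    · intro B0 hB0
      rw [hv_box]
      by_cases hex : ∃ C' : MF, C'.box ∈ mats ∧ ENP (B0.iff C')
      · obtain ⟨C', hm, hEq⟩ := hex
        have hC' : ENP C' := ENP.of_iff hEq hB0
        have hvt : vk C'.box = true := (hCs C' hm).2.1 (ENP.iff_top.1 hC')
        rw [if_pos ⟨C', hm, hEq, hvt⟩]
      · have h1 : ¬ ∃ C' : MF, C'.box ∈ mats ∧ ENP (B0.iff C') ∧ vk C'.box = true := by
          rintro ⟨C', hm, hEq, _⟩; exact hex ⟨C', hm, hEq⟩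
        rw [if_neg h1, if_neg hex, if_pos hB0]
    · intro B0 C0 hBC
      rw [hv_box, hv_box]
      have e1 : (∃ C' : MF, C'.box ∈ mats ∧ ENP (B0.iff C') ∧ vk C'.box = true) ↔
          (∃ C' : MF, C'.box ∈ mats ∧ ENP (C0.iff C') ∧ vk C'.box = true) := by
        constructor
        · rintro ⟨C', a, b, c⟩; exact ⟨C', a, ENP.iff_trans (ENP.iff_symm hBC) b, c⟩
        · rintro ⟨C', a, b, c⟩; exact ⟨C', a, ENP.iff_trans hBC b, c⟩
      have e2 : (∃ C' : MF, C'.box ∈ mats ∧ ENP (B0.iff C')) ↔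
          (∃ C' : MF, C'.box ∈ mats ∧ ENP (C0.iff C')) := by
        constructor
        · rintro ⟨C', a, b⟩; exact ⟨C', a, ENP.iff_trans (ENP.iff_symm hBC) b⟩
        · rintro ⟨C', a, b⟩; exact ⟨C', a, ENP.iff_trans hBC b⟩
      have e3 : ENP B0 ↔ ENP C0 := ⟨ENP.of_iff hBC, ENP.of_iff (ENP.iff_symm hBC)⟩
      simp only [e1, e2, e3]
  have hs := hE.sound v hAdm
  simp only [MF.iff, MF.peval] at hs
  have hAB : A.peval v = B.peval v := by
    cases hA : A.peval v <;> cases hB : B.peval v <;> simp_all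
  have tA : A.peval v = A.peval vk :=
    peval_congr_s14 fun P hP => hagree P (List.mem_append_left _ hP)
  have tB : B.peval v = B.peval vk :=
    peval_congr_s14 fun P hP => hagree P (List.mem_append_right _ hP)
  rw [← tA, ← tB, hAB]

/-- If every constrained valuation makes A and B equal, then `ENP (A.iff B)`. -/
lemma completeness_step {A B : MF}
    (hspec : ∀ s : List Bool, s.length = (matoms A ++ matoms B).length →
      ConS (matoms A ++ matoms B) s →
      A.peval (vkf (matoms A ++ matoms B) s) = B.peval (vkf (matoms A ++ matoms B) s)) :
    ENP (A.iff B) := by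
  classical
  set mats := matoms A ++ matoms B with hmats
  let lb : List MF := mats.filterMap fun P =>
    match P with
    | .box C => some C
    | _ => none
  have lb_mem : ∀ C : MF, C ∈ lb ↔ C.box ∈ mats := by
    intro C
    constructor
    · intro h
      obtain ⟨P, hP, hPC⟩ := List.mem_filterMap.1 h
      cases P <;> simp at hPC
      rwa [← hPC]
    · intro h
      exact List.mem_filterMap.2 ⟨C.box, h, rfl⟩
  let D : List MF :=
    (lb.flatMap fun C => lb.flatMap fun C' =>
        if ENP (C.iff C') then [C.box.iff C'.box] else []) ++
    ((lb.flatMap fun C => if ENP (C.iff eTop) then [C.box] else []) ++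
     (lb.flatMap fun C => if ENP (C.iff MF.bot) then [C.box.neg] else []))
  have hD : ∀ X ∈ D, ENP X := by
    intro X hX
    rcases List.mem_append.1 hX with h | h
    · obtain ⟨C, _, h2⟩ := List.mem_flatMap.1 h
      obtain ⟨C', _, h3⟩ := List.mem_flatMap.1 h2
      by_cases hE : ENP (C.iff C')
      · rw [if_pos hE] at h3; simp at h3; rw [h3]; exact hE.re
      · rw [if_neg hE] at h3; simp at h3
    · rcases List.mem_append.1 h with h | h
      · obtain ⟨C, _, h2⟩ := List.mem_flatMap.1 h
        by_cases hE : ENP (C.iff eTop)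
        · rw [if_pos hE] at h2; simp at h2; rw [h2]; exact ENP.box_of_iff_top hE
        · rw [if_neg hE] at h2; simp at h2
      · obtain ⟨C, _, h2⟩ := List.mem_flatMap.1 h
        by_cases hE : ENP (C.iff MF.bot)
        · rw [if_pos hE] at h2; simp at h2; rw [h2]; exact ENP.negbox_of_iff_bot hE
        · rw [if_neg hE] at h2; simp at h2
  apply ENP.of_cut D hD
  intro v hv
  set s : List Bool := mats.map v with hs
  have hkey : ∀ P ∈ mats, vkf mats s P = v P := by
    intro P hP
    show s.getD ((mats.map encodeMF).idxOf (encodeMF P)) false = v P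
    rw [indexOf_map_encode, hs]
    exact getD_map_eval hP
  have hCs : ConS mats s := by
    intro C hC
    have hClb : C ∈ lb := (lb_mem C).2 hC
    refine ⟨?_, ?_, ?_⟩
    · intro hE
      have hmem : C.box.neg ∈ D := by
        apply List.mem_append_right
        apply List.mem_append_right
        exact List.mem_flatMap.2 ⟨C, hClb, by rw [if_pos hE]; simp⟩
      have := hv _ hmem
      simp only [MF.peval] at this
      rw [hkey _ hC]
      simpa using this
    · intro hE
      have hmem : C.box ∈ D := by
        apply List.mem_append_right
        apply List.mem_append_left
        exact List.mem_flatMap.2 ⟨C, hClb, by rw [if_pos hE]; simp⟩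
      have := hv _ hmem
      simp only [MF.peval] at this
      rw [hkey _ hC]
      exact this
    · intro C' hC' hE
      have hmem : (C.box.iff C'.box) ∈ D := by
        apply List.mem_append_left
        exact List.mem_flatMap.2 ⟨C, hClb,
          List.mem_flatMap.2 ⟨C', (lb_mem C').2 hC', by rw [if_pos hE]; simp⟩⟩
      have := hv _ hmem
      simp only [MF.iff, MF.peval] at this
      rw [hkey _ hC, hkey _ hC']
      cases h1 : v C.box <;> cases h2 : v C'.box <;> simp_all
  have hlen : s.length = mats.length := by rw [hs, List.length_map]
  have hAB := hspec s hlen hCs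
  have tA : A.peval (vkf mats s) = A.peval v :=
    peval_congr_s14 fun P hP => hkey P (List.mem_append_left _ hP)
  have tB : B.peval (vkf mats s) = B.peval v :=
    peval_congr_s14 fun P hP => hkey P (List.mem_append_right _ hP)
  rw [tA, tB] at hAB
  simp only [MF.iff, MF.peval, hAB]
  cases B.peval v <;> rfl

/-! ### Boolean bridge -/

lemma bimp {x y : Bool} : (!x || y) = true ↔ (x = true → y = true) := by
  cases x <;> cases y <;> simp

lemma conB_iff (L : List ℕ) (prev : ℕ → Bool) (s : List Bool) :
    conB L prev s = true ↔ ∀ p ∈ L, p.unpair.1 = 6 →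
      ((prev (Nat.pair p.unpair.2 2) = true → s.getD (L.idxOf p) false = false) ∧
       (prev (Nat.pair p.unpair.2 8) = true → s.getD (L.idxOf p) false = true) ∧
       (∀ q ∈ L, q.unpair.1 = 6 → prev (Nat.pair p.unpair.2 q.unpair.2) = true →
         s.getD (L.idxOf p) false = s.getD (L.idxOf q) false)) := by
  unfold conB
  rw [List.all_eq_true]
  simp only [bimp, beq_iff_eq, Bool.and_eq_true, Bool.not_eq_true', List.all_eq_true]

lemma pair6_ge (x : ℕ) : 42 ≤ Nat.pair 6 x := by
  unfold Nat.pair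
  split <;> nlinarith

/-! ### main theorem: fGN decides provable equivalence -/

theorem mainG : ∀ (p : ℕ) (A B : MF), Nat.pair (encodeMF A) (encodeMF B) = p →
    (fGN p = true ↔ ENP (A.iff B)) := by
  intro p
  induction p using Nat.strong_induction_on with
  | _ n ih =>
  rintro A B rfl
  have ebot : encodeMF MF.bot = 2 := rfl
  have etop : encodeMF eTop = 8 := rfl
  have hLL : atomsN (encodeMF A) ++ atomsN (encodeMF B)
      = (matoms A ++ matoms B).map encodeMF := by
    rw [atomsN_encode, atomsN_encode, List.map_append]
  -- step 1 : unfold fGN into the spec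
  have hfg : fGN (Nat.pair (encodeMF A) (encodeMF B)) = true ↔
      (∀ s : List Bool, s.length = (matoms A ++ matoms B).length →
        conB ((matoms A ++ matoms B).map encodeMF)
          (fun m => if m < Nat.pair (encodeMF A) (encodeMF B) then fGN m else false) s = true →
        A.peval (vkf (matoms A ++ matoms B) s) = B.peval (vkf (matoms A ++ matoms B) s)) := by
    rw [fGN_eq]
    simp only [F_G, Nat.unpair_pair, hLL]
    rw [List.all_eq_true]
    constructor
    · intro h s hlen hcon
      have hmem : s ∈ allBools ((matoms A ++ matoms B).map encodeMF).length :=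
        mem_allBools.2 (by rw [List.length_map]; exact hlen)
      have h2 := h s hmem
      rw [bimp] at h2
      have h3 := h2 hcon
      rw [beq_iff_eq, pevN_encode, pevN_encode] at h3
      exact h3
    · intro h s hmem
      rw [bimp]
      intro hcon
      rw [beq_iff_eq, pevN_encode, pevN_encode]
      exact h s (by rw [← List.length_map (f := encodeMF)]; exact mem_allBools.1 hmem) hcon
  -- bounds
  have hboxle : ∀ C : MF, C.box ∈ matoms A ++ matoms B →
      encodeMF C.box ≤ max (encodeMF A) (encodeMF B) := by
    intro C hC
    rcases List.mem_append.1 hC with h | h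
    exacts [le_max_of_le_left (matoms_le h), le_max_of_le_right (matoms_le h)]
  have hClt : ∀ C : MF, C.box ∈ matoms A ++ matoms B →
      encodeMF C < max (encodeMF A) (encodeMF B) := by
    intro C hC
    have h1 : encodeMF C < encodeMF C.box := pair_right_lt (by norm_num)
    exact lt_of_lt_of_le h1 (hboxle C hC)
  have h42 : ∀ C : MF, C.box ∈ matoms A ++ matoms B →
      (42 : ℕ) ≤ max (encodeMF A) (encodeMF B) := by
    intro C hC
    exact le_trans (pair6_ge (encodeMF C)) (hboxle C hC)
  -- the key bridge using the induction hypothesis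
  have hkey : ∀ C : MF, C.box ∈ matoms A ++ matoms B →
      ∀ Df : MF, encodeMF Df < max (encodeMF A) (encodeMF B) →
      ((if Nat.pair (encodeMF C) (encodeMF Df) < Nat.pair (encodeMF A) (encodeMF B) then
          fGN (Nat.pair (encodeMF C) (encodeMF Df)) else false) = true ↔ ENP (C.iff Df)) := by
    intro C hC Df hDf
    have hlt : Nat.pair (encodeMF C) (encodeMF Df) < Nat.pair (encodeMF A) (encodeMF B) :=
      pair_lt_pair (hClt C hC) hDf
    rw [if_pos hlt]
    exact ih _ hlt C Df rfl
  -- step 2 : constraint translation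
  have hcon : ∀ s : List Bool,
      (conB ((matoms A ++ matoms B).map encodeMF)
        (fun m => if m < Nat.pair (encodeMF A) (encodeMF B) then fGN m else false) s = true ↔
       ConS (matoms A ++ matoms B) s) := by
    intro s
    rw [conB_iff]
    constructor
    · intro h C hC
      have hp6 : (encodeMF C.box).unpair.1 = 6 := by simp [encodeMF, Nat.unpair_pair]
      have hp2 : (encodeMF C.box).unpair.2 = encodeMF C := by simp [encodeMF, Nat.unpair_pair]
      have hmem : encodeMF C.box ∈ (matoms A ++ matoms B).map encodeMF :=
        List.mem_map_of_mem hC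
      obtain ⟨c1, c2, c3⟩ := h (encodeMF C.box) hmem hp6
      rw [hp2] at c1 c2 c3
      have k1 := hkey C hC MF.bot (by rw [ebot]; have := h42 C hC; omega)
      rw [ebot] at k1
      have k2 := hkey C hC eTop (by rw [etop]; have := h42 C hC; omega)
      rw [etop] at k2
      refine ⟨fun hEq => c1 (k1.2 hEq), fun hEq => c2 (k2.2 hEq), fun C' hC' hEq => ?_⟩
      have hp6' : (encodeMF C'.box).unpair.1 = 6 := by simp [encodeMF, Nat.unpair_pair]
      have hp2' : (encodeMF C'.box).unpair.2 = encodeMF C' := by simp [encodeMF, Nat.unpair_pair]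
      have k3 := hkey C hC C' (hClt C' hC')
      have c3' := c3 (encodeMF C'.box) (List.mem_map_of_mem hC') hp6'
      rw [hp2'] at c3'
      exact c3' (k3.2 hEq)
    · intro h p hpmem hp6
      obtain ⟨P, hP, rfl⟩ := List.mem_map.1 hpmem
      rcases mats_shape hP with ⟨m, rfl⟩ | ⟨C, rfl⟩
      · exfalso
        simp [encodeMF, Nat.unpair_pair] at hp6
      · have hp2 : (encodeMF C.box).unpair.2 = encodeMF C := by simp [encodeMF, Nat.unpair_pair]
        rw [hp2]
        obtain ⟨d1, d2, d3⟩ := h C hP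
        have k1 := hkey C hP MF.bot (by rw [ebot]; have := h42 C hP; omega)
        rw [ebot] at k1
        have k2 := hkey C hP eTop (by rw [etop]; have := h42 C hP; omega)
        rw [etop] at k2
        refine ⟨fun hpr => d1 (k1.1 hpr), fun hpr => d2 (k2.1 hpr), ?_⟩
        intro q hqmem hq6 hpr
        obtain ⟨Q, hQ, rfl⟩ := List.mem_map.1 hqmem
        rcases mats_shape hQ with ⟨m, rfl⟩ | ⟨C', rfl⟩
        · exfalso
          simp [encodeMF, Nat.unpair_pair] at hq6
        · have hq2 : (encodeMF C'.box).unpair.2 = encodeMF C' := by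
            simp [encodeMF, Nat.unpair_pair]
          rw [hq2] at hpr
          have k3 := hkey C hP C' (hClt C' hQ)
          exact d3 C' hQ (k3.1 hpr)
  -- conclude
  rw [hfg]
  constructor
  · intro h
    apply completeness_step
    intro s hlen hCs
    exact h s hlen ((hcon s).2 hCs)
  · intro hE s _ hc
    exact soundness_step hE s ((hcon s).1 hc)

/-! ### Primrec framework for strong recursion -/

lemma getD_range_map {σ : Type} (f : ℕ → σ) (d : σ) (n m : ℕ) :
    ((List.range n).map f).getD m d = if m < n then f m else d := by
  rw [List.getD_eq_getElem?_getD, List.getElem?_map]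
  by_cases h : m < n
  · rw [List.getElem?_range h]; simp [h]
  · rw [List.getElem?_eq_none (by simpa using Nat.le_of_not_lt h)]; simp [h]

theorem primrec_srec {α σ : Type} [Primcodable α] [Primcodable σ] {d : σ}
    {F : α → ℕ → (ℕ → σ) → σ} {f : α → ℕ → σ}
    (hf : ∀ a n, f a n = F a n (fun m => if m < n then f a m else d))
    (hG : Primrec₂ fun (a : α) (l : List σ) => F a l.length (fun m => l.getD m d)) :
    Primrec₂ f := by
  apply Primrec.nat_strong_rec f
    (g := fun a l => some (F a l.length (fun m => l.getD m d)))
    (Primrec.option_some.comp hG).to₂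
  intro a n
  rw [List.length_map, List.length_range]
  have he : (fun m => ((List.range n).map (f a)).getD m d) =
      (fun m => if m < n then f a m else d) := funext fun m => getD_range_map _ _ _ _
  rw [he, ← hf]

theorem primrec_srec0 {σ : Type} [Primcodable σ] {d : σ}
    {F : ℕ → (ℕ → σ) → σ} {f : ℕ → σ}
    (hf : ∀ n, f n = F n (fun m => if m < n then f m else d))
    (hG : Primrec fun (l : List σ) => F l.length (fun m => l.getD m d)) :
    Primrec f := by
  have h2 : Primrec₂ (fun (_ : Unit) (n : ℕ) => f n) :=
    primrec_srec (F := fun _ n prev => F n prev) (fun _ n => hf n) (hG.comp Primrec.snd)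
  exact (h2.comp (Primrec.const ()) Primrec.id).of_eq fun n => rfl

theorem primrec_list_all {α β : Type} [Primcodable α] [Primcodable β]
    {f : α → List β} {g : α → β → Bool} (hf : Primrec f)
    (hg : Primrec fun p : α × β => g p.1 p.2) :
    Primrec fun a => (f a).all (g a) := by
  have hg' : Primrec₂ g := hg
  have h := Primrec.list_foldr hf (Primrec.const true)
    (Primrec.and.comp (hg'.comp Primrec.fst (Primrec.fst.comp Primrec.snd))
      (Primrec.snd.comp Primrec.snd)).to₂
  refine h.of_eq fun a => ?_
  induction f a with
  | nil => rfl
  | cons b t ih => simp [List.all_cons, ih]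

theorem primrec_allBools : Primrec allBools := by
  have hstep : Primrec₂ fun (_ : ℕ) (ih : List (List Bool)) =>
      ih.flatMap fun s => [false :: s, true :: s] := by
    have hg : Primrec₂ fun (_ : ℕ × List (List Bool)) (s : List Bool) =>
        [false :: s, true :: s] :=
      (Primrec.list_cons.comp
        (Primrec.list_cons.comp (Primrec.const false) Primrec.snd)
        (Primrec.list_cons.comp
          (Primrec.list_cons.comp (Primrec.const true) Primrec.snd)
          (Primrec.const []))).to₂
    exact (Primrec.list_flatMap (Primrec.snd :
      Primrec fun p : ℕ × List (List Bool) => p.2) hg).to₂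
  have h := Primrec.nat_rec₁ ([[]] : List (List Bool)) hstep
  refine h.of_eq fun n => ?_
  induction n with
  | zero => rfl
  | succ n ih => simp only [allBools, ← ih]

/-! ### Primrec instances -/

theorem primrec_validN : Primrec validN := by
  apply primrec_srec0 (F := F_valid) (d := false) validN_eq
  unfold F_valid
  have hn : Primrec fun l : List Bool => l.length := Primrec.list_length
  have ht : Primrec fun l : List Bool => l.length.unpair.1 :=
    Primrec.fst.comp (Primrec.unpair.comp hn)
  have hx : Primrec fun l : List Bool => l.length.unpair.2 :=
    Primrec.snd.comp (Primrec.unpair.comp hn)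
  have hx1 : Primrec fun l : List Bool => l.length.unpair.2.unpair.1 :=
    Primrec.fst.comp (Primrec.unpair.comp hx)
  have hx2 : Primrec fun l : List Bool => l.length.unpair.2.unpair.2 :=
    Primrec.snd.comp (Primrec.unpair.comp hx)
  have hprev : ∀ {u : List Bool → ℕ}, Primrec u →
      Primrec fun l : List Bool => l.getD (u l) false :=
    fun hu => (Primrec.list_getD false).comp Primrec.id hu
  refine Primrec.ite (Primrec.eq.comp ht (Primrec.const 0)) (Primrec.const true) ?_
  refine Primrec.ite (Primrec.eq.comp ht (Primrec.const 1))
    (Primrec.beq.comp hx (Primrec.const 0)) ?_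
  refine Primrec.ite (Primrec.eq.comp ht (Primrec.const 2)) (hprev hx) ?_
  refine Primrec.ite (Primrec.eq.comp ht (Primrec.const 6)) (hprev hx) ?_
  refine Primrec.ite (Primrec.nat_le.comp ht (Primrec.const 5))
    (Primrec.and.comp (hprev hx1) (hprev hx2)) (Primrec.const false)

theorem primrec_atomsN : Primrec atomsN := by
  apply primrec_srec0 (F := F_atoms) (d := ([] : List ℕ)) atomsN_eq
  unfold F_atoms
  have hn : Primrec fun l : List (List ℕ) => l.length := Primrec.list_length
  have ht : Primrec fun l : List (List ℕ) => l.length.unpair.1 :=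
    Primrec.fst.comp (Primrec.unpair.comp hn)
  have hx : Primrec fun l : List (List ℕ) => l.length.unpair.2 :=
    Primrec.snd.comp (Primrec.unpair.comp hn)
  have hx1 : Primrec fun l : List (List ℕ) => l.length.unpair.2.unpair.1 :=
    Primrec.fst.comp (Primrec.unpair.comp hx)
  have hx2 : Primrec fun l : List (List ℕ) => l.length.unpair.2.unpair.2 :=
    Primrec.snd.comp (Primrec.unpair.comp hx)
  have hprev : ∀ {u : List (List ℕ) → ℕ}, Primrec u →
      Primrec fun l : List (List ℕ) => l.getD (u l) [] :=
    fun hu => (Primrec.list_getD []).comp Primrec.id hu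
  have hsing : Primrec fun l : List (List ℕ) => [l.length] :=
    Primrec.list_cons.comp hn (Primrec.const [])
  refine Primrec.ite (Primrec.eq.comp ht (Primrec.const 0)) hsing ?_
  refine Primrec.ite (Primrec.eq.comp ht (Primrec.const 1)) (Primrec.const []) ?_
  refine Primrec.ite (Primrec.eq.comp ht (Primrec.const 2)) (hprev hx) ?_
  refine Primrec.ite (Primrec.eq.comp ht (Primrec.const 6)) hsing ?_
  refine Primrec.ite (Primrec.nat_le.comp ht (Primrec.const 5))
    (Primrec.list_append.comp (hprev hx1) (hprev hx2)) (Primrec.const [])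

theorem primrec_pevN : Primrec₂ pevN := by
  apply primrec_srec (F := F_pev) (d := false) pevN_eq
  unfold F_pev
  set γ := (List Bool × List ℕ) × List Bool with hγ
  have hs : Primrec fun c : γ => c.1.1 := Primrec.fst.comp Primrec.fst
  have hLL : Primrec fun c : γ => c.1.2 := Primrec.snd.comp Primrec.fst
  have hl : Primrec fun c : γ => c.2 := Primrec.snd
  have hn : Primrec fun c : γ => c.2.length := Primrec.list_length.comp hl
  have ht : Primrec fun c : γ => c.2.length.unpair.1 :=
    Primrec.fst.comp (Primrec.unpair.comp hn)
  have hx : Primrec fun c : γ => c.2.length.unpair.2 :=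
    Primrec.snd.comp (Primrec.unpair.comp hn)
  have hx1 : Primrec fun c : γ => c.2.length.unpair.2.unpair.1 :=
    Primrec.fst.comp (Primrec.unpair.comp hx)
  have hx2 : Primrec fun c : γ => c.2.length.unpair.2.unpair.2 :=
    Primrec.snd.comp (Primrec.unpair.comp hx)
  have hprev : ∀ {u : γ → ℕ}, Primrec u →
      Primrec fun c : γ => c.2.getD (u c) false :=
    fun hu => (Primrec.list_getD false).comp hl hu
  have hatom : Primrec fun c : γ => c.1.1.getD (c.1.2.idxOf c.2.length) false :=
    (Primrec.list_getD false).comp hs (Primrec.list_idxOf.comp hn hLL)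
  refine Primrec.ite (Primrec.eq.comp ht (Primrec.const 0)) hatom ?_
  refine Primrec.ite (Primrec.eq.comp ht (Primrec.const 1)) (Primrec.const false) ?_
  refine Primrec.ite (Primrec.eq.comp ht (Primrec.const 2))
    (Primrec.not.comp (hprev hx)) ?_
  refine Primrec.ite (Primrec.eq.comp ht (Primrec.const 3))
    (Primrec.and.comp (hprev hx1) (hprev hx2)) ?_
  refine Primrec.ite (Primrec.eq.comp ht (Primrec.const 4))
    (Primrec.or.comp (hprev hx1) (hprev hx2)) ?_
  refine Primrec.ite (Primrec.eq.comp ht (Primrec.const 5))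
    (Primrec.or.comp (Primrec.not.comp (hprev hx1)) (hprev hx2)) ?_
  refine Primrec.ite (Primrec.eq.comp ht (Primrec.const 6)) hatom (Primrec.const false)

theorem primrec_fGN : Primrec fGN := by
  apply primrec_srec0 (F := F_G) (d := false) fGN_eq
  unfold F_G conB
  have hn : Primrec fun l : List Bool => l.length := Primrec.list_length
  have ha : Primrec fun l : List Bool => l.length.unpair.1 :=
    Primrec.fst.comp (Primrec.unpair.comp hn)
  have hb : Primrec fun l : List Bool => l.length.unpair.2 :=
    Primrec.snd.comp (Primrec.unpair.comp hn)
  have hLan : Primrec fun l : List Bool =>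
      atomsN l.length.unpair.1 ++ atomsN l.length.unpair.2 :=
    Primrec.list_append.comp (primrec_atomsN.comp ha) (primrec_atomsN.comp hb)
  have hAB : Primrec fun l : List Bool =>
      allBools (atomsN l.length.unpair.1 ++ atomsN l.length.unpair.2).length :=
    primrec_allBools.comp (Primrec.list_length.comp hLan)
  apply primrec_list_all hAB
  -- context δ = (List Bool) × (List Bool) : (prev-list l, valuation s)
  set δ := List Bool × List Bool with hδ
  have hl : Primrec fun c : δ => c.1 := Primrec.fst
  have hsv : Primrec fun c : δ => c.2 := Primrec.snd
  have hLd : Primrec fun c : δ =>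
      atomsN c.1.length.unpair.1 ++ atomsN c.1.length.unpair.2 := hLan.comp Primrec.fst
  have had : Primrec fun c : δ => c.1.length.unpair.1 := ha.comp Primrec.fst
  have hbd : Primrec fun c : δ => c.1.length.unpair.2 := hb.comp Primrec.fst
  have hpev1 : Primrec fun c : δ =>
      pevN (c.2, atomsN c.1.length.unpair.1 ++ atomsN c.1.length.unpair.2)
        c.1.length.unpair.1 :=
    primrec_pevN.comp (Primrec.pair hsv hLd) had
  have hpev2 : Primrec fun c : δ =>
      pevN (c.2, atomsN c.1.length.unpair.1 ++ atomsN c.1.length.unpair.2)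
        c.1.length.unpair.2 :=
    primrec_pevN.comp (Primrec.pair hsv hLd) hbd
  refine Primrec.or.comp (Primrec.not.comp ?_) (Primrec.beq.comp hpev1 hpev2)
  -- the constraint check, an `all` over the atom list
  apply primrec_list_all hLd
  -- context ε = δ × ℕ  (.., atom p)
  have hpe : Primrec fun c : δ × ℕ => c.2 := Primrec.snd
  have hle : Primrec fun c : δ × ℕ => c.1.1 := Primrec.fst.comp Primrec.fst
  have hse : Primrec fun c : δ × ℕ => c.1.2 := Primrec.snd.comp Primrec.fst
  have hLe : Primrec fun c : δ × ℕ =>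
      atomsN c.1.1.length.unpair.1 ++ atomsN c.1.1.length.unpair.2 :=
    hLd.comp Primrec.fst
  have hp6 : Primrec fun c : δ × ℕ => c.2.unpair.1 ==  6 :=
    Primrec.beq.comp (Primrec.fst.comp (Primrec.unpair.comp hpe)) (Primrec.const 6)
  have hp2 : Primrec fun c : δ × ℕ => c.2.unpair.2 :=
    Primrec.snd.comp (Primrec.unpair.comp hpe)
  have hprevE : ∀ {u : δ × ℕ → ℕ}, Primrec u →
      Primrec fun c : δ × ℕ => c.1.1.getD (u c) false :=
    fun hu => (Primrec.list_getD false).comp hle hu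
  have hmemp : Primrec fun c : δ × ℕ =>
      c.1.2.getD ((atomsN c.1.1.length.unpair.1 ++ atomsN c.1.1.length.unpair.2).idxOf c.2)
        false :=
    (Primrec.list_getD false).comp hse (Primrec.list_idxOf.comp hpe hLe)
  refine Primrec.or.comp (Primrec.not.comp hp6) ?_
  refine Primrec.and.comp ?_ (Primrec.and.comp ?_ ?_)
  · exact Primrec.or.comp
      (Primrec.not.comp (hprevE (Primrec₂.natPair.comp hp2 (Primrec.const 2))))
      (Primrec.not.comp hmemp)
  · exact Primrec.or.comp
      (Primrec.not.comp (hprevE (Primrec₂.natPair.comp hp2 (Primrec.const 8))))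
      hmemp
  -- innermost all over q
  apply primrec_list_all hLe
  -- context ζ = (δ × ℕ) × ℕ
  have hqe : Primrec fun c : (δ × ℕ) × ℕ => c.2 := Primrec.snd
  have hq6 : Primrec fun c : (δ × ℕ) × ℕ => c.2.unpair.1 == 6 :=
    Primrec.beq.comp (Primrec.fst.comp (Primrec.unpair.comp hqe)) (Primrec.const 6)
  have hq2 : Primrec fun c : (δ × ℕ) × ℕ => c.2.unpair.2 :=
    Primrec.snd.comp (Primrec.unpair.comp hqe)
  have hp2' : Primrec fun c : (δ × ℕ) × ℕ => c.1.2.unpair.2 := hp2.comp Primrec.fst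
  have hlf : Primrec fun c : (δ × ℕ) × ℕ => c.1.1.1 := hle.comp Primrec.fst
  have hsf : Primrec fun c : (δ × ℕ) × ℕ => c.1.1.2 := hse.comp Primrec.fst
  have hLf : Primrec fun c : (δ × ℕ) × ℕ =>
      atomsN c.1.1.1.length.unpair.1 ++ atomsN c.1.1.1.length.unpair.2 :=
    hLe.comp Primrec.fst
  have hprevF : Primrec fun c : (δ × ℕ) × ℕ =>
      c.1.1.1.getD (Nat.pair c.1.2.unpair.2 c.2.unpair.2) false :=
    (Primrec.list_getD false).comp hlf (Primrec₂.natPair.comp hp2' hq2)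
  have hmemp' : Primrec fun c : (δ × ℕ) × ℕ =>
      c.1.1.2.getD
        ((atomsN c.1.1.1.length.unpair.1 ++ atomsN c.1.1.1.length.unpair.2).idxOf c.1.2)
        false :=
    (Primrec.list_getD false).comp hsf
      (Primrec.list_idxOf.comp (Primrec.snd.comp Primrec.fst) hLf)
  have hmemq : Primrec fun c : (δ × ℕ) × ℕ =>
      c.1.1.2.getD
        ((atomsN c.1.1.1.length.unpair.1 ++ atomsN c.1.1.1.length.unpair.2).idxOf c.2)
        false :=
    (Primrec.list_getD false).comp hsf (Primrec.list_idxOf.comp hqe hLf)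
  exact Primrec.or.comp (Primrec.not.comp hq6)
    (Primrec.or.comp (Primrec.not.comp hprevF) (Primrec.beq.comp hmemp' hmemq))

/-! ### final assembly -/

lemma ENP_code_iff (n : ℕ) :
    (∃ A : MF, encodeMF A = n ∧ ENP A) ↔ (validN n && fGN (Nat.pair n 8)) = true := by
  constructor
  · rintro ⟨A, rfl, hA⟩
    rw [Bool.and_eq_true]
    refine ⟨validN_encode A, ?_⟩
    have h8 : encodeMF eTop = 8 := rfl
    exact (mainG (Nat.pair (encodeMF A) 8) A eTop (by rw [h8])).2 (ENP.iff_top.1 hA)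
  · intro h
    rw [Bool.and_eq_true] at h
    obtain ⟨h1, h2⟩ := h
    have hd := validN_decode n h1
    refine ⟨decodeMF n, hd, ?_⟩
    have h8 : encodeMF eTop = 8 := rfl
    have := (mainG (Nat.pair n 8) (decodeMF n) eTop (by rw [hd, h8])).1 h2
    exact ENP.iff_top.2 this

/-- Decidability of ENP: the set of Gödel numbers of ENP-derivable formulas
is a decidable (computable) predicate. -/
theorem ENP_decidable :
    ComputablePred (fun n : ℕ => ∃ A : MF, encodeMF A = n ∧ ENP A) := by
  rw [ComputablePred.computable_iff]
  refine ⟨fun n => validN n && fGN (Nat.pair n 8), ?_, ?_⟩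
  · exact Primrec.to_comp (Primrec.and.comp primrec_validN
      (primrec_fGN.comp (Primrec₂.natPair.comp Primrec.id (Primrec.const 8))))
  · funext n
    exact propext (ENP_code_iff n)
end
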